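/- arXiv:2006.14443 — 9 statements merged into one kernel-verified Lean document; each statement's English description precedes it below -/
import Mathlib

section
/- Let α be a flow on a C*-algebra B and A an α-regular subalgebra. A trace state τ on A satisfying τ(b b*) = τ(b* α_{iβ}(b)) for all (A,α)-normalizers b also satisfies the a priori stronger conformality condition τ(b a b* c) = τ(a b* c α_{iβ}(b)) for all a, c ∈ A and all (A,α)-normalizers b. -/
open Filter Topology


/-- A point killed by every continuous functional vanishing on a closed subspace
belongs to the subspace. -/
lemma aux_mem_of_dual {E : Type*} [NormedAddCommGroup E] [NormedSpace ℂ E]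
    (S : Submodule ℂ E) (hS : IsClosed (S : Set E)) (x : E)
    (h : ∀ φ : E →L[ℂ] ℂ, (∀ y ∈ S, φ y = 0) → φ x = 0) : x ∈ S := by
  haveI := hS
  rw [← Submodule.Quotient.mk_eq_zero S]
  apply NormedSpace.eq_zero_of_forall_dual_eq_zero ℂ
  intro f
  let mkCLM : E →L[ℂ] E ⧸ S :=
    LinearMap.mkContinuous S.mkQ 1 (by
      intro y
      simpa using Submodule.Quotient.norm_mk_le S y)
  have := h (f.comp mkCLM) (by
    intro y hy
    have : (Submodule.Quotient.mk y : E ⧸ S) = 0 := (Submodule.Quotient.mk_eq_zero S).2 hy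
    simp [mkCLM, ContinuousLinearMap.comp_apply, LinearMap.mkContinuous_apply, this])
  simpa [mkCLM] using this

/-- An entire function with values in a closed subspace on the real line stays in it. -/
lemma aux_analytic_mem {E : Type*} [NormedAddCommGroup E] [NormedSpace ℂ E]
    (S : Submodule ℂ E) (hS : IsClosed (S : Set E)) (g : ℂ → E)
    (hg : Differentiable ℂ g) (hreal : ∀ t : ℝ, g (t : ℂ) ∈ S) (z : ℂ) : g z ∈ S := by
  apply aux_mem_of_dual S hS
  intro φ hφ
  have hdiff : Differentiable ℂ fun w => φ (g w) := φ.differentiable.comp hg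
  have hana : AnalyticOnNhd ℂ (fun w => φ (g w)) Set.univ :=
    Complex.analyticOnNhd_univ_iff_differentiable.mpr hdiff
  -- the sequence (1/(n+1) : ℝ) ↪ ℂ tends to 0 within ℂ \ {0}
  have hseq : Tendsto (fun n : ℕ => ((1 / ((n : ℝ) + 1) : ℝ) : ℂ)) atTop (𝓝[≠] (0 : ℂ)) := by
    apply tendsto_nhdsWithin_of_tendsto_nhds_of_eventually_within
    · have h0 : Tendsto (fun n : ℕ => (1 / ((n : ℝ) + 1) : ℝ)) atTop (𝓝 0) :=
        tendsto_one_div_add_atTop_nhds_zero_nat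
      have := (Complex.continuous_ofReal.tendsto (0 : ℝ)).comp h0
      simpa [Function.comp_def] using this
    · filter_upwards with n
      simp only [Set.mem_compl_iff, Set.mem_singleton_iff]
      intro hcontra
      rw [Complex.ofReal_eq_zero] at hcontra
      have : ((n : ℝ) + 1) ≠ 0 := by positivity
      simp [div_eq_zero_iff, this] at hcontra
  have hfreq : ∃ᶠ w in 𝓝[≠] (0 : ℂ), φ (g w) = 0 := by
    apply hseq.frequently
    apply Frequently.of_forall
    intro n
    exact hφ _ (hreal _)
  have := hana.eqOn_zero_of_preconnected_of_frequently_eq_zero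
    isPreconnected_univ (Set.mem_univ (0 : ℂ)) hfreq
  simpa using this (Set.mem_univ z)

/-- polarization -/
lemma aux_polar {B : Type*} [NormedRing B] [StarRing B] [NormedAlgebra ℂ B] [StarModule ℂ B]
    (A : StarSubalgebra ℂ B) (L : B → ℂ)
    (hadd : ∀ u v, L (u + v) = L u + L v)
    (hsmul : ∀ (c : ℂ) u, L (c • u) = c * L u)
    (hdiag : ∀ e ∈ A, L (e * star e) = 0)
    {x y : B} (hx : x ∈ A) (hy : y ∈ A) : L (x * star y) = 0 := by
  have expand : ∀ c : ℂ, L ((x + c • y) * star (x + c • y)) =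
      L (x * star x) + star c * L (x * star y) + c * L (y * star x)
        + (c * star c) * L (y * star y) := by
    intro c
    rw [star_add, star_smul]
    simp only [mul_add, add_mul, smul_mul_assoc, mul_smul_comm, smul_smul, hadd, hsmul]
    ring
  have mem : ∀ c : ℂ, x + c • y ∈ A := fun c => add_mem hx (SMulMemClass.smul_mem c hy)
  have h1 := (expand 1).symm.trans (hdiag _ (mem 1))
  have h2 := (expand (-1)).symm.trans (hdiag _ (mem (-1)))
  have h3 := (expand Complex.I).symm.trans (hdiag _ (mem Complex.I))
  have h4 := (expand (-Complex.I)).symm.trans (hdiag _ (mem (-Complex.I)))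
  simp only [star_one, one_mul, mul_one, star_neg, Complex.star_def, Complex.conj_I,
    map_one, neg_neg, neg_mul, mul_neg, Complex.I_mul_I] at h1 h2 h3 h4
  have hI : Complex.I * Complex.I = -1 := Complex.I_mul_I
  linear_combination (h1 - h2 + Complex.I * (h3 - h4)) / 4
    + ((L (x * star y) - L (y * star x)) / 2) * hI
/-- Let `α` be a flow on a C*-algebra `B` and `A` an `α`-regular subalgebra.
A trace state `τ` on `A` satisfying `τ (b b*) = τ (b* α_{iβ}(b))` for all
`(A,α)`-normalizers `b` also satisfies the a priori stronger conformality condition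
`τ (b a b* c) = τ (a b* c α_{iβ}(b))` for all `a, c ∈ A` and all `(A,α)`-normalizers `b`. -/
theorem stmt2 {B : Type*} [NormedRing B] [StarRing B] [CStarRing B]
    [NormedAlgebra ℂ B] [CompleteSpace B] [StarModule ℂ B]
    -- the flow
    (α : ℝ → (B →⋆ₐ[ℂ] B))
    (hα0 : α 0 = StarAlgHom.id ℂ B)
    (hαadd : ∀ s t : ℝ, (α (s + t)) = (α s).comp (α t))
    (hαcont : ∀ x : B, Continuous fun t => α t x)
    -- the subalgebra
    (A : StarSubalgebra ℂ B) (hAclosed : IsClosed (A : Set B))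
    -- the set of (A,α)-normalizers
    (Nα : Set B)
    (hNα : Nα = {b : B | (∃ F : ℂ → B, Differentiable ℂ F ∧ ∀ t : ℝ, F (t : ℂ) = α t b) ∧
      ∀ t : ℝ, ∀ x ∈ A, (α t b * x * star b ∈ A ∧ star b * x * α t b ∈ A)})
    -- α-regularity: A contains an approximate unit for B,
    (happrox : ∃ (ι : Type) (l : Filter ι) (e : ι → B), l.NeBot ∧ (∀ i, e i ∈ A) ∧
      ∀ x : B, Tendsto (fun i => e i * x) l (𝓝 x) ∧ Tendsto (fun i => x * e i) l (𝓝 x))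
    -- A lies in the fixed-point algebra of α,
    (hAfix : ∀ t : ℝ, ∀ x ∈ A, α t x = x)
    -- and B is the closed linear span of the normalizers.
    (hgen : (Submodule.span ℂ Nα).topologicalClosure = ⊤)
    -- τ is a trace state on A
    (τ : ↥A →L[ℂ] ℂ) (hτnorm : ‖τ‖ = 1)
    (hτpos : ∀ x : ↥A, 0 ≤ (τ (star x * x)).re ∧ (τ (star x * x)).im = 0)
    (hτtrace : ∀ x y : ↥A, τ (x * y) = τ (y * x))
    (β : ℝ)
    -- the weak KMS-type condition τ(b b*) = τ(b* α_{iβ}(b))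
    (hweak : ∀ b ∈ Nα, ∀ F : ℂ → B, Differentiable ℂ F → (∀ t : ℝ, F (t : ℂ) = α t b) →
      ∀ (h₁ : b * star b ∈ A) (h₂ : star b * F (Complex.I * β) ∈ A),
        τ ⟨b * star b, h₁⟩ = τ ⟨star b * F (Complex.I * β), h₂⟩) :
    -- the conclusion: full conformality
    ∀ b ∈ Nα, ∀ F : ℂ → B, Differentiable ℂ F → (∀ t : ℝ, F (t : ℂ) = α t b) →
      ∀ a c : ↥A,
      ∀ (h₁ : b * (a : B) * star b * (c : B) ∈ A)
        (h₂ : (a : B) * star b * (c : B) * F (Complex.I * β) ∈ A),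
        τ ⟨b * (a : B) * star b * (c : B), h₁⟩ =
          τ ⟨(a : B) * star b * (c : B) * F (Complex.I * β), h₂⟩ := by
  intro b hb F hFdiff hFeq a c h₁ h₂
  rw [hNα] at hb
  have hbn : ∀ t : ℝ, ∀ x ∈ A, (α t b * x * star b ∈ A ∧ star b * x * α t b ∈ A) := hb.2
  have hα0' : ∀ x : B, α 0 x = x := fun x => by rw [hα0]; rfl
  have K1 : ∀ x ∈ A, b * x * star b ∈ A := by
    intro x hx
    have := (hbn 0 x hx).1
    rwa [hα0'] at this
  set G : B := F (Complex.I * (β : ℂ)) with hG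
  -- the submodule underlying A
  set S_A : Submodule ℂ B := Subalgebra.toSubmodule A.toSubalgebra with hS_A
  have memS : ∀ {u : B}, u ∈ A → u ∈ S_A := fun hu => (Subalgebra.mem_toSubmodule _).2 hu
  have memA : ∀ {u : B}, u ∈ S_A → u ∈ A := fun hu => (Subalgebra.mem_toSubmodule _).1 hu
  have hSclosed : IsClosed ((S_A : Submodule ℂ B) : Set B) := hAclosed
  have K2 : ∀ x ∈ A, ∀ z : ℂ, star b * x * F z ∈ A := by
    intro x hx z
    apply memA
    apply aux_analytic_mem S_A hSclosed (fun w => star b * x * F w)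
      (hFdiff.const_mul (star b * x))
    intro t
    apply memS
    have := (hbn t x hx).2
    rwa [← hFeq t] at this
  -- extend τ to a continuous functional on B
  let incl : S_A →L[ℂ] ↥A :=
    { toFun := fun x => ⟨x.1, memA x.2⟩,
      map_add' := fun x y => rfl,
      map_smul' := fun r x => rfl,
      cont := Continuous.subtype_mk continuous_subtype_val _ }
  obtain ⟨τ', hτ'ext, -⟩ := exists_extension_norm_eq S_A (τ.comp incl)
  have hext : ∀ (x : B) (hx : x ∈ A), τ' x = τ ⟨x, hx⟩ := by
    intro x hx
    exact hτ'ext ⟨x, memS hx⟩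
  have trace' : ∀ x y : B, x ∈ A → y ∈ A → τ' (x * y) = τ' (y * x) := by
    intro x y hx hy
    rw [hext _ (mul_mem hx hy), hext _ (mul_mem hy hx)]
    exact hτtrace ⟨x, hx⟩ ⟨y, hy⟩
  -- the key identity coming from the weak KMS condition applied to d * b * e
  have key : ∀ d ∈ A, ∀ e ∈ A,
      τ' (b * (e * star e) * star b * (star d * d)) =
        τ' ((e * star e) * star b * (star d * d) * G) := by
    intro d hd e he
    set b' : B := d * b * e with hb'def
    have hb'mem : b' ∈ Nα := by
      rw [hNα]
      refine ⟨⟨fun z => d * F z * e, (hFdiff.const_mul d).mul_const e, fun t => by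
        show d * F (t : ℂ) * e = α t (d * b * e)
        rw [hFeq t, map_mul, map_mul, hAfix t d hd, hAfix t e he]⟩, ?_⟩
      intro t x hx
      constructor
      · have eq1 : α t b' * x * star b' =
            d * (α t b * (e * x * star e) * star b) * star d := by
          simp only [hb'def, map_mul, hAfix t d hd, hAfix t e he, star_mul, mul_assoc]
        rw [eq1]
        exact mul_mem (mul_mem hd ((hbn t _ (mul_mem (mul_mem he hx) (star_mem he))).1))
          (star_mem hd)
      · have eq1 : star b' * x * α t b' =
            star e * (star b * (star d * x * d) * α t b) * e := by
          simp only [hb'def, map_mul, hAfix t d hd, hAfix t e he, star_mul, mul_assoc]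
        rw [eq1]
        exact mul_mem (mul_mem (star_mem he)
          ((hbn t _ (mul_mem (mul_mem (star_mem hd) hx) hd)).2)) he
    have e1 : b' * star b' = d * (b * (e * star e) * star b) * star d := by
      simp only [hb'def, star_mul, mul_assoc]
    have e2 : star b' * (d * G * e) = star e * (star b * (star d * d) * G) * e := by
      simp only [hb'def, star_mul, mul_assoc]
    have h₁' : b' * star b' ∈ A := by
      rw [e1]
      exact mul_mem (mul_mem hd (K1 _ (mul_mem he (star_mem he)))) (star_mem hd)
    have h₂' : star b' * (d * G * e) ∈ A := by
      rw [e2]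
      exact mul_mem (mul_mem (star_mem he) (K2 _ (mul_mem (star_mem hd) hd) _)) he
    have happly := hweak b' hb'mem (fun z => d * F z * e)
      ((hFdiff.const_mul d).mul_const e)
      (fun t => by
        show d * F (t : ℂ) * e = α t b'
        rw [hb'def, hFeq t, map_mul, map_mul, hAfix t d hd, hAfix t e he]) h₁' h₂'
    have keyRaw : τ' (b' * star b') = τ' (star b' * (d * G * e)) := by
      rw [hext _ h₁', hext _ h₂']
      exact happly
    -- massage the left-hand side using the trace property
    set M : B := b * (e * star e) * star b with hM
    have hMmem : M ∈ A := K1 _ (mul_mem he (star_mem he))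
    set Y : B := star b * (star d * d) * G with hY
    have hYmem : Y ∈ A := K2 _ (mul_mem (star_mem hd) hd) _
    calc τ' (b * (e * star e) * star b * (star d * d))
        = τ' (M * (star d * d)) := rfl
      _ = τ' ((star d * d) * M) := trace' _ _ hMmem (mul_mem (star_mem hd) hd)
      _ = τ' (star d * (d * M)) := by rw [mul_assoc]
      _ = τ' ((d * M) * star d) := (trace' _ _ (mul_mem hd hMmem) (star_mem hd)).symm
      _ = τ' (b' * star b') := by rw [e1, mul_assoc]
      _ = τ' (star b' * (d * G * e)) := keyRaw
      _ = τ' ((star e * Y) * e) := by rw [e2, mul_assoc]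
      _ = τ' (e * (star e * Y)) := trace' _ _ (mul_mem (star_mem he) hYmem) he
      _ = τ' ((e * star e) * Y) := by rw [mul_assoc]
      _ = τ' ((e * star e) * star b * (star d * d) * G) := by
          simp only [hY, mul_assoc]
  -- first polarization (in e)
  have step1 : ∀ d ∈ A, ∀ x ∈ A, ∀ y ∈ A,
      τ' (b * (x * star y) * star b * (star d * d)) =
        τ' ((x * star y) * star b * (star d * d) * G) := by
    intro d hd x hx y hy
    have := aux_polar A
      (fun p => τ' (b * p * star b * (star d * d)) - τ' (p * star b * (star d * d) * G))
      (fun u v => by simp only [mul_add, add_mul, map_add]; ring)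
      (fun r u => by
        simp only [mul_smul_comm, smul_mul_assoc, map_smul, smul_eq_mul]; ring)
      (fun e he => sub_eq_zero.2 (key d hd e he)) hx hy
    exact sub_eq_zero.1 this
  -- second polarization (in d)
  have step2 : ∀ x ∈ A, ∀ y ∈ A, ∀ v ∈ A, ∀ w ∈ A,
      τ' (b * (x * star y) * star b * (v * star w)) =
        τ' ((x * star y) * star b * (v * star w) * G) := by
    intro x hx y hy v hv w hw
    have := aux_polar A
      (fun q => τ' (b * (x * star y) * star b * q) - τ' ((x * star y) * star b * q * G))
      (fun u₁ u₂ => by simp only [mul_add, add_mul, map_add]; ring)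
      (fun r u => by
        simp only [mul_smul_comm, smul_mul_assoc, map_smul, smul_eq_mul]; ring)
      (fun e he => by
        have h := step1 (star e) (star_mem he) x hx y hy
        rw [star_star] at h
        exact sub_eq_zero.2 h) hv hw
    exact sub_eq_zero.1 this
  -- approximate-unit limits
  obtain ⟨ι, l, u, hlne, humem, hulim⟩ := happrox
  have hΨcont1 : ∀ q : B, Continuous fun p : B =>
      τ' (b * p * star b * q) - τ' (p * star b * q * G) := by
    intro q
    apply Continuous.sub
    · exact τ'.continuous.comp
        ((((continuous_const.mul continuous_id).mul continuous_const).mul continuous_const))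
    · exact τ'.continuous.comp
        (((continuous_id.mul continuous_const).mul continuous_const).mul continuous_const)
  have hΨcont2 : Continuous fun q : B =>
      τ' (b * (a : B) * star b * q) - τ' ((a : B) * star b * q * G) := by
    apply Continuous.sub
    · exact τ'.continuous.comp (continuous_const.mul continuous_id)
    · exact τ'.continuous.comp ((continuous_const.mul continuous_id).mul continuous_const)
  have lim1 : ∀ j, τ' (b * (a : B) * star b * ((c : B) * u j)) =
      τ' ((a : B) * star b * ((c : B) * u j) * G) := by
    intro j
    have h0 : ∀ i, τ' (b * ((a : B) * u i) * star b * ((c : B) * u j)) -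
        τ' (((a : B) * u i) * star b * ((c : B) * u j) * G) = 0 := by
      intro i
      have := step2 (a : B) a.2 (star (u i)) (star_mem (humem i))
        (c : B) c.2 (star (u j)) (star_mem (humem j))
      rw [star_star, star_star] at this
      exact sub_eq_zero.2 this
    have htend : Tendsto (fun i => τ' (b * ((a : B) * u i) * star b * ((c : B) * u j)) -
        τ' (((a : B) * u i) * star b * ((c : B) * u j) * G)) l
        (𝓝 (τ' (b * (a : B) * star b * ((c : B) * u j)) -
          τ' ((a : B) * star b * ((c : B) * u j) * G))) :=
      ((hΨcont1 ((c : B) * u j)).tendsto _).comp ((hulim (a : B)).2)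
    rw [show (fun i => τ' (b * ((a : B) * u i) * star b * ((c : B) * u j)) -
        τ' (((a : B) * u i) * star b * ((c : B) * u j) * G)) = fun _ => (0 : ℂ)
      from funext h0] at htend
    have := tendsto_nhds_unique htend tendsto_const_nhds
    exact sub_eq_zero.1 this
  have lim2 : τ' (b * (a : B) * star b * (c : B)) =
      τ' ((a : B) * star b * (c : B) * G) := by
    have h0 : ∀ j, τ' (b * (a : B) * star b * ((c : B) * u j)) -
        τ' ((a : B) * star b * ((c : B) * u j) * G) = 0 := fun j => sub_eq_zero.2 (lim1 j)
    have htend : Tendsto (fun j => τ' (b * (a : B) * star b * ((c : B) * u j)) -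
        τ' ((a : B) * star b * ((c : B) * u j) * G)) l
        (𝓝 (τ' (b * (a : B) * star b * (c : B)) -
          τ' ((a : B) * star b * (c : B) * G))) :=
      (hΨcont2.tendsto _).comp ((hulim (c : B)).2)
    rw [show (fun j => τ' (b * (a : B) * star b * ((c : B) * u j)) -
        τ' ((a : B) * star b * ((c : B) * u j) * G)) = fun _ => (0 : ℂ)
      from funext h0] at htend
    exact sub_eq_zero.1 (tendsto_nhds_unique htend tendsto_const_nhds)
  rw [← hext _ h₁, ← hext _ h₂]
  exact lim2
end

section
/- Let A be a unital C*-algebra with a G-action γ and cocycle D as above, let β ∈ ℝ, and let ω be a β-KMS state on A ⋊_γ G for the flow α^D. Then (a) ω restricted to A is a tracial state, and (b) ω(γ_g(a)) = ω(a e^{β D_g}) for all a ∈ A and g ∈ G. -/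
/-- Let `A` be a unital C*-algebra with a `G`-action `γ` and cocycle `D` as
above, `β ∈ ℝ`, and `ω` a `β`-KMS state on `A ⋊_γ G` for the flow `α^D` (expressed via the
equivalent condition `ω (a u_g b u_h) = ω (b u_h a u_g e^{β D_g})`).  Then
(a) `ω` restricted to (the copy of) `A` is a tracial state, and
(b) `ω (γ_g a) = ω (a e^{β D_g})` for all `a ∈ A` and `g ∈ G`. -/
theorem stmt5 {A : Type*} [NormedRing A] [StarRing A] [CStarRing A]
    [NormedAlgebra ℂ A] [CompleteSpace A] [StarModule ℂ A]
    {G : Type*} [Group G] [Countable G]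
    (γ : G → (A ≃⋆ₐ[ℂ] A))
    (hγ1 : ∀ x : A, γ 1 x = x)
    (hγmul : ∀ (g h : G) (x : A), γ (g * h) x = γ g (γ h x))
    (D : G → A)
    (hDsa : ∀ g, star (D g) = D g)
    (hDcentral : ∀ g, ∀ x : A, D g * x = x * D g)
    (hDcocycle : ∀ g h : G, γ h⁻¹ (D g) + D h = D (g * h))
    -- the crossed product B = A ⋊_γ G
    {B : Type*} [NormedRing B] [StarRing B] [CStarRing B]
    [NormedAlgebra ℂ B] [CompleteSpace B] [StarModule ℂ B]
    (ι : A →⋆ₐ[ℂ] B) (u : G → B)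
    (hu_mul : ∀ g h : G, u g * u h = u (g * h))
    (hu_unitary : ∀ g : G, star (u g) * u g = 1 ∧ u g * star (u g) = 1)
    (hu_cov : ∀ (g : G) (a : A), u g * ι a * star (u g) = ι (γ g a))
    (β : ℝ)
    -- ω is a state on B
    (ω : B →L[ℂ] ℂ) (hω1 : ω 1 = 1)
    (hωpos : ∀ x : B, 0 ≤ (ω (star x * x)).re ∧ (ω (star x * x)).im = 0)
    -- the β-KMS condition for α^D
    (hKMS : ∀ (a b : A) (g h : G),
      ω (ι a * u g * (ι b * u h)) =
        ω (ι b * u h * (ι a * u g) * ι (NormedSpace.exp ((β : ℂ) • D g)))) :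
    -- (a) ω|_A is tracial
    (∀ a b : A, ω (ι (a * b)) = ω (ι (b * a))) ∧
    -- (b) ω(γ_g(a)) = ω(a e^{β D_g})
    (∀ (a : A) (g : G),
      ω (ι (γ g a)) = ω (ι (a * NormedSpace.exp ((β : ℂ) • D g)))) := by
  have hu1 : u 1 = 1 := by
    have h := hu_mul 1 1
    rw [one_mul] at h
    calc u 1 = star (u 1) * u 1 * u 1 := by rw [(hu_unitary 1).1, one_mul]
    _ = star (u 1) * (u 1 * u 1) := by rw [mul_assoc]
    _ = 1 := by rw [h, (hu_unitary 1).1]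
  have hD1 : D 1 = 0 := by
    have h := hDcocycle 1 1
    rw [inv_one, hγ1, one_mul] at h
    exact left_eq_add.mp h.symm
  have hexp1 : NormedSpace.exp ((β : ℂ) • D 1) = 1 := by
    rw [hD1, smul_zero, NormedSpace.exp_zero]
  have hstar : ∀ g : G, star (u g) = u g⁻¹ := by
    intro g
    calc star (u g) = star (u g) * (u g * u g⁻¹) := by
          rw [hu_mul, mul_inv_cancel, hu1, mul_one]
    _ = star (u g) * u g * u g⁻¹ := by rw [mul_assoc]
    _ = u g⁻¹ := by rw [(hu_unitary g).1, one_mul]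
  constructor
  · intro a b
    have h := hKMS a b 1 1
    simp only [hu1, hexp1, map_one, mul_one] at h
    rw [map_mul ι a b, map_mul ι b a]
    exact h
  · intro a g
    have h := hKMS 1 a g g⁻¹
    have hlhs : ι 1 * u g * (ι a * u g⁻¹) = ι (γ g a) := by
      rw [map_one, one_mul, ← hstar, ← mul_assoc, hu_cov]
    have hrhs : ι a * u g⁻¹ * (ι 1 * u g) * ι (NormedSpace.exp ((β : ℂ) • D g))
        = ι (a * NormedSpace.exp ((β : ℂ) • D g)) := by
      rw [map_one, one_mul, mul_assoc (ι a), hu_mul, inv_mul_cancel, hu1, mul_one, ← map_mul]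
    rw [hlhs, hrhs] at h
    exact h
end

section
/- Let A be a unital C*-algebra with G-action γ and cocycle D, let τ be a tracial state on A, and let P : A ⋊_γ G → A be the canonical conditional expectation with P(a u_g) = 0 for g ≠ e and P(a) = a. Then τ ∘ P is a β-KMS state for α^D if and only if τ(γ_g(a)) = τ(a e^{β D_g}) for all a ∈ A and g ∈ G. -/
/-- With `A`, `γ`, `D` and the crossed product as before, let `τ` be a tracial
state on `A` and `P : A ⋊_γ G → A` the canonical conditional expectation with
`P (a u_g) = 0` for `g ≠ e` and `P a = a`.  Then `τ ∘ P` is a `β`-KMS state for `α^D`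
(expressed via the condition on the spanning elements) if and only if
`τ (γ_g a) = τ (a e^{β D_g})` for all `a ∈ A` and `g ∈ G`. -/
theorem stmt6 {A : Type*} [NormedRing A] [StarRing A] [CStarRing A]
    [NormedAlgebra ℂ A] [CompleteSpace A] [StarModule ℂ A]
    {G : Type*} [Group G] [Countable G]
    (γ : G → (A ≃⋆ₐ[ℂ] A))
    (hγ1 : ∀ x : A, γ 1 x = x)
    (hγmul : ∀ (g h : G) (x : A), γ (g * h) x = γ g (γ h x))
    (D : G → A)
    (hDsa : ∀ g, star (D g) = D g)
    (hDcentral : ∀ g, ∀ x : A, D g * x = x * D g)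
    (hDcocycle : ∀ g h : G, γ h⁻¹ (D g) + D h = D (g * h))
    -- the crossed product B = A ⋊_γ G
    {B : Type*} [NormedRing B] [StarRing B] [CStarRing B]
    [NormedAlgebra ℂ B] [CompleteSpace B] [StarModule ℂ B]
    (ι : A →⋆ₐ[ℂ] B) (u : G → B)
    (hu_mul : ∀ g h : G, u g * u h = u (g * h))
    (hu_unitary : ∀ g : G, star (u g) * u g = 1 ∧ u g * star (u g) = 1)
    (hu_cov : ∀ (g : G) (a : A), u g * ι a * star (u g) = ι (γ g a))
    (β : ℝ)
    -- τ is a tracial state on A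
    (τ : A →L[ℂ] ℂ) (hτ1 : τ 1 = 1)
    (hτpos : ∀ x : A, 0 ≤ (τ (star x * x)).re ∧ (τ (star x * x)).im = 0)
    (hτtrace : ∀ x y : A, τ (x * y) = τ (y * x))
    -- P is the canonical conditional expectation
    (P : B →L[ℂ] A)
    (hP0 : ∀ (a : A) (g : G), g ≠ 1 → P (ι a * u g) = 0)
    (hPA : ∀ a : A, P (ι a) = a) :
    -- τ ∘ P is a β-KMS state for α^D iff τ is (γ, β, D)-conformal
    ((∀ (a b : A) (g h : G),
        τ (P (ι a * u g * (ι b * u h))) =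
          τ (P (ι b * u h * (ι a * u g) * ι (NormedSpace.exp ((β : ℂ) • D g))))) ↔
      (∀ (a : A) (g : G),
        τ (γ g a) = τ (a * NormedSpace.exp ((β : ℂ) • D g)))) := by
  have hginv : ∀ (g : G) (x : A), γ g (γ g⁻¹ x) = x := by
    intro g x
    rw [← hγmul, mul_inv_cancel, hγ1]
  have hu1 : u (1 : G) = 1 := by
    have h := hu_mul 1 1
    rw [mul_one] at h
    calc u (1:G) = 1 * u 1 := (one_mul _).symm
    _ = (star (u 1) * u 1) * u 1 := by rw [(hu_unitary 1).1]
    _ = star (u 1) * (u 1 * u 1) := by rw [mul_assoc]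
    _ = star (u 1) * u 1 := by rw [h]
    _ = 1 := (hu_unitary 1).1
  have hcomm : ∀ (g : G) (b : A), u g * ι b = ι (γ g b) * u g := by
    intro g b
    calc u g * ι b = u g * ι b * (star (u g) * u g) := by
          rw [(hu_unitary g).1, mul_one]
    _ = (u g * ι b * star (u g)) * u g := by rw [← mul_assoc]
    _ = ι (γ g b) * u g := by rw [hu_cov]
  have key : ∀ (a b : A) (g h : G),
      ι a * u g * (ι b * u h) = ι (a * γ g b) * u (g * h) := by
    intro a b g h
    rw [mul_assoc (ι a), ← mul_assoc (u g), hcomm, mul_assoc, hu_mul,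
      ← mul_assoc, ← map_mul]
  have key2 : ∀ (x : A) (k : G) (c : A), ι x * u k * ι c = ι (x * γ k c) * u k := by
    intro x k c
    rw [mul_assoc, hcomm, ← mul_assoc, ← map_mul]
  constructor
  · intro H a g
    have h := H 1 a g g⁻¹
    rw [key, key, key2] at h
    simp only [one_mul, mul_inv_cancel, inv_mul_cancel, hu1, mul_one, map_one,
      hγ1, hPA] at h
    exact h
  · intro hC a b g h
    rw [key, key, key2]
    by_cases hgh : g * h = 1
    · obtain rfl : h = g⁻¹ := eq_inv_of_mul_eq_one_right hgh
      simp only [mul_inv_cancel, inv_mul_cancel, hu1, mul_one, hPA, hγ1]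
      calc τ (a * γ g b) = τ (γ g b * a) := hτtrace _ _
      _ = τ (γ g (b * γ g⁻¹ a)) := by rw [map_mul (γ g), hginv]
      _ = τ (b * γ g⁻¹ a * NormedSpace.exp ((β : ℂ) • D g)) := hC _ g
    · have hhg : h * g ≠ 1 := by
        intro hc
        exact hgh (by rw [eq_inv_of_mul_eq_one_left hc, mul_inv_cancel])
      rw [hP0 _ _ hgh, hP0 _ _ hhg]
end

section
/- Let τ be a tracial state on A satisfying τ(γ_g(a)) = τ(a e^{β D_g}) for all a ∈ A and g ∈ G. Then for each g ∈ G the map π_τ(a)Ω_τ ↦ π_τ(γ_g(a) e^{(β/2) D_{g⁻¹}})Ω_τ extends to a unitary W_g on the GNS Hilbert space H_τ, and g ↦ W_g is a unitary representation of G satisfying W_g π_τ(a) W_g* = π_τ(γ_g(a)) for all a ∈ A. -/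
/-- Let `τ` be a tracial state on `A` satisfying
`τ (γ_g a) = τ (a e^{β D_g})` for all `a ∈ A`, `g ∈ G`.  Then for each `g ∈ G` the map
`π_τ(a) Ω_τ ↦ π_τ(γ_g(a) e^{(β/2) D_{g⁻¹}}) Ω_τ` extends to a unitary `W_g` on the GNS
Hilbert space `H_τ`, and `g ↦ W_g` is a unitary representation of `G` with
`W_g π_τ(a) W_g* = π_τ(γ_g a)`. -/
theorem stmt7 {A : Type*} [NormedRing A] [StarRing A] [CStarRing A]
    [NormedAlgebra ℂ A] [CompleteSpace A] [StarModule ℂ A]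
    {G : Type*} [Group G] [Countable G]
    (γ : G → (A ≃⋆ₐ[ℂ] A))
    (hγ1 : ∀ x : A, γ 1 x = x)
    (hγmul : ∀ (g h : G) (x : A), γ (g * h) x = γ g (γ h x))
    (D : G → A)
    (hDsa : ∀ g, star (D g) = D g)
    (hDcentral : ∀ g, ∀ x : A, D g * x = x * D g)
    (hDcocycle : ∀ g h : G, γ h⁻¹ (D g) + D h = D (g * h))
    (β : ℝ)
    -- τ is a tracial state on A
    (τ : A →L[ℂ] ℂ) (hτ1 : τ 1 = 1)
    (hτpos : ∀ x : A, 0 ≤ (τ (star x * x)).re ∧ (τ (star x * x)).im = 0)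
    (hτtrace : ∀ x y : A, τ (x * y) = τ (y * x))
    -- the conformality condition
    (hconf : ∀ (a : A) (g : G), τ (γ g a) = τ (a * NormedSpace.exp ((β : ℂ) • D g)))
    -- the GNS representation (H_τ, π_τ, Ω_τ) of τ
    {H : Type*} [NormedAddCommGroup H] [InnerProductSpace ℂ H] [CompleteSpace H]
    (π : A →⋆ₐ[ℂ] (H →L[ℂ] H)) (Ω : H)
    (hGNS : ∀ a : A, (inner ℂ Ω (π a Ω) : ℂ) = τ a)
    (hcyclic : (Submodule.span ℂ (Set.range fun a : A => π a Ω)).topologicalClosure = ⊤) :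
    -- conclusion: the unitary representation W
    ∃ W : G → (H ≃ₗᵢ[ℂ] H),
      (∀ (g : G) (a : A),
        W g (π a Ω) =
          π (γ g a * NormedSpace.exp (((β / 2 : ℝ) : ℂ) • D g⁻¹)) Ω) ∧
      (∀ g h : G, ∀ x : H, W (g * h) x = W g (W h x)) ∧
      (∀ (g : G) (a : A) (x : H), W g (π a ((W g).symm x)) = π (γ g a) x) := by
  classical
  letI : CStarAlgebra A :=
    { ‹NormedRing A›, ‹StarRing A›, ‹CompleteSpace A›, ‹CStarRing A›,
      ‹NormedAlgebra ℂ A›, ‹StarModule ℂ A› with }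
  letI : NormedAlgebra ℚ A := .restrictScalars ℚ ℂ A
  set c : ℂ := ((β / 2 : ℝ) : ℂ) with hc
  set E : G → A := fun g => NormedSpace.exp (c • D g⁻¹) with hEdef
  have hγcont : ∀ g : G, Continuous (γ g) := fun g => (StarAlgEquiv.isometry (γ g)).continuous
  have hγexp : ∀ (g : G) (x : A), γ g (NormedSpace.exp x) = NormedSpace.exp (γ g x) :=
    fun g x => NormedSpace.map_exp (γ g) (hγcont g) x
  have hD1 : D 1 = 0 := by
    have h := hDcocycle 1 1
    rw [inv_one, hγ1 (D 1), mul_one] at h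
    exact add_eq_right.mp h
  have hDinv : ∀ g : G, D g⁻¹ = - γ g (D g) := by
    intro g
    have h := hDcocycle g g⁻¹
    rw [inv_inv, mul_inv_cancel, hD1] at h
    exact eq_neg_of_add_eq_zero_right h
  have hcen : ∀ (g h : G) (x : A), γ g (D h) * x = x * γ g (D h) := by
    intro g h x
    have hx : γ g (γ g⁻¹ x) = x := by rw [← hγmul, mul_inv_cancel, hγ1]
    calc γ g (D h) * x = γ g (D h) * γ g (γ g⁻¹ x) := by rw [hx]
      _ = γ g (D h * γ g⁻¹ x) := by rw [map_mul]
      _ = γ g (γ g⁻¹ x * D h) := by rw [hDcentral]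
      _ = γ g (γ g⁻¹ x) * γ g (D h) := by rw [map_mul]
      _ = x * γ g (D h) := by rw [hx]
  have hEcen : ∀ (g : G) (x : A), Commute x (E g) := fun g x =>
    Commute.exp_right (Commute.smul_right (Commute.symm (hDcentral g⁻¹ x)) c)
  have hEstar : ∀ g : G, star (E g) = E g := by
    intro g
    rw [hEdef]
    simp only [NormedSpace.star_exp, star_smul, hDsa, hc, Complex.star_def,
      Complex.conj_ofReal]
  -- the key trace identity : τ (γ g x * exp (β • D g⁻¹)) = τ x
  have hkey : ∀ (x : A) (g : G), τ (γ g x * NormedSpace.exp ((β : ℂ) • D g⁻¹)) = τ x := by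
    intro x g
    have h1 : ((β : ℂ) • D g⁻¹) = γ g ((-(β : ℂ)) • D g) := by
      rw [map_smul, hDinv g]
      rw [smul_neg, neg_smul]
    rw [h1, ← hγexp, ← map_mul, hconf, mul_assoc,
      ← NormedSpace.exp_add_of_commute
        (((Commute.refl (D g)).smul_left (-(β : ℂ))).smul_right (β : ℂ)),
      neg_smul, neg_add_cancel, NormedSpace.exp_zero, mul_one]
  -- inner products of GNS vectors
  have hadj : ∀ (a : A) (x y : H), (inner ℂ (π a x) y : ℂ) = inner ℂ x (π (star a) y) := by
    intro a x y
    have h : π a = ContinuousLinearMap.adjoint (π (star a)) := by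
      rw [← ContinuousLinearMap.star_eq_adjoint, ← map_star, star_star]
    rw [h, ContinuousLinearMap.adjoint_inner_left]
  have hinner : ∀ a b : A, (inner ℂ (π a Ω) (π b Ω) : ℂ) = τ (star a * b) := by
    intro a b
    rw [hadj, ← ContinuousLinearMap.mul_apply, ← map_mul, hGNS]
  -- the densely-defined maps
  set L : A →ₗ[ℂ] H :=
    { toFun := fun a => π a Ω
      map_add' := by intro a b; simp only [map_add]; rfl
      map_smul' := by intro m a; simp only [map_smul]; rfl } with hL
  set S : G → (A →ₗ[ℂ] H) := fun g =>
    { toFun := fun a => π (γ g a * E g) Ω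
      map_add' := by intro a b; simp only [map_add, add_mul]; rfl
      map_smul' := by intro m a; simp only [map_smul, smul_mul_assoc]; rfl } with hS
  -- the isometry property on the dense subspace
  have hSnorm : ∀ (g : G) (a : A), ‖S g a‖ = ‖L a‖ := by
    intro g a
    have h2 : (inner ℂ (S g a) (S g a) : ℂ) = inner ℂ (L a) (L a) := by
      show (inner ℂ (π (γ g a * E g) Ω) (π (γ g a * E g) Ω) : ℂ) = inner ℂ (π a Ω) (π a Ω)
      rw [hinner, hinner]
      have h3 : star (γ g a * E g) * (γ g a * E g)
          = γ g (star a * a) * (E g * E g) := by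
        rw [star_mul, hEstar]
        calc E g * star (γ g a) * (γ g a * E g)
            = star (γ g a) * E g * (γ g a * E g) := by
              rw [← (hEcen g (star (γ g a))).eq]
          _ = star (γ g a) * (E g * (γ g a * E g)) := by rw [mul_assoc]
          _ = star (γ g a) * ((E g * γ g a) * E g) := by rw [mul_assoc]
          _ = star (γ g a) * ((γ g a * E g) * E g) := by rw [(hEcen g (γ g a)).eq]
          _ = star (γ g a) * (γ g a * (E g * E g)) := by rw [mul_assoc]
          _ = star (γ g a) * γ g a * (E g * E g) := by rw [← mul_assoc]
          _ = γ g (star a * a) * (E g * E g) := by rw [map_mul, map_star]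
      have hcc : c + c = (β : ℂ) := by rw [hc]; push_cast; ring
      have h4 : E g * E g = NormedSpace.exp ((β : ℂ) • D g⁻¹) := by
        rw [hEdef]
        rw [← NormedSpace.exp_add_of_commute
          (((Commute.refl (D g⁻¹)).smul_left c).smul_right c), ← add_smul, hcc]
      rw [h3, h4, hkey]
    rw [inner_self_eq_norm_sq_to_K, inner_self_eq_norm_sq_to_K] at h2
    have h6 : ‖S g a‖ ^ 2 = ‖L a‖ ^ 2 := by exact_mod_cast h2
    exact (sq_eq_sq₀ (norm_nonneg _) (norm_nonneg _)).mp h6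
  -- the dense submodule
  set M : Submodule ℂ H := LinearMap.range L with hM
  have hspan : Submodule.span ℂ (Set.range fun a : A => π a Ω) = M := by
    apply le_antisymm
    · rw [Submodule.span_le]
      rintro x ⟨a, rfl⟩
      exact ⟨a, rfl⟩
    · rintro x ⟨a, rfl⟩
      exact Submodule.subset_span ⟨a, rfl⟩
  have hMdense : Dense (M : Set H) := by
    rw [← hspan]
    exact Submodule.dense_iff_topologicalClosure_eq_top.mpr hcyclic
  have hsdense : Dense (Set.range fun a : A => π a Ω) := by
    have : (Set.range fun a : A => π a Ω) = (M : Set H) := by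
      ext x
      constructor
      · rintro ⟨a, rfl⟩; exact ⟨a, rfl⟩
      · rintro ⟨a, rfl⟩; exact ⟨a, rfl⟩
    rw [this]; exact hMdense
  have hedense : DenseRange (M.subtypeL) := by
    have : Set.range (M.subtypeL) = (M : Set H) := Subtype.range_coe
    rw [DenseRange, this]; exact hMdense
  have he : IsUniformInducing (M.subtypeL) :=
    (isometry_subtype_coe).isUniformInducing
  -- the isometry on M
  have hker : ∀ g : G, LinearMap.ker L ≤ LinearMap.ker (S g) := by
    intro g a ha
    rw [LinearMap.mem_ker] at ha ⊢
    rw [← norm_eq_zero, hSnorm g a, ha, norm_zero]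
  set f : G → (M →ₗ[ℂ] H) := fun g =>
    ((LinearMap.ker L).liftQ (S g) (hker g)).comp
      (L.quotKerEquivRange.symm.toLinearMap) with hf
  have hfL : ∀ (g : G) (a : A), f g ⟨L a, LinearMap.mem_range_self L a⟩ = S g a := by
    intro g a
    have h1 : (L.quotKerEquivRange.symm ⟨L a, LinearMap.mem_range_self L a⟩)
        = Submodule.Quotient.mk a := by
      apply L.quotKerEquivRange.injective
      rw [LinearEquiv.apply_symm_apply]
      exact Subtype.ext (L.quotKerEquivRange_apply_mk a).symm
    rw [hf]
    simp only [LinearMap.comp_apply, LinearEquiv.coe_toLinearMap, h1]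
    exact Submodule.liftQ_apply _ _ _
  have hfnorm : ∀ (g : G) (m : M), ‖f g m‖ = ‖m‖ := by
    rintro g ⟨x, hx⟩
    obtain ⟨a, rfl⟩ := hx
    rw [hfL g a, hSnorm g a]
    rfl
  set fI : G → (M →ₗᵢ[ℂ] H) := fun g => ⟨f g, hfnorm g⟩ with hfI
  -- the extensions
  set W0 : G → (H →L[ℂ] H) := fun g =>
    ContinuousLinearMap.extend (fI g).toContinuousLinearMap M.subtypeL with hW0
  have hW0key : ∀ (g : G) (a : A), W0 g (π a Ω) = π (γ g a * E g) Ω := by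
    intro g a
    have h1 : (π a Ω : H) = M.subtypeL ⟨L a, LinearMap.mem_range_self L a⟩ := rfl
    rw [hW0, h1, ContinuousLinearMap.extend_eq (h_dense := hedense) (h_e := he)]
    show f g ⟨L a, LinearMap.mem_range_self L a⟩ = _
    rw [hfL g a]
    rfl
  -- density principle
  have hext : ∀ (T T' : H →L[ℂ] H), (∀ a : A, T (π a Ω) = T' (π a Ω)) → T = T' := by
    intro T T' hTT'
    ext x
    have hx : x ∈ closure (Set.range fun a : A => π a Ω) := hsdense x
    refine Set.EqOn.closure (fun y hy => ?_) T.continuous T'.continuous hx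
    obtain ⟨a, rfl⟩ := hy
    exact hTT' a
  -- norms
  have hW0norm : ∀ (g : G) (x : H), ‖W0 g x‖ = ‖x‖ := by
    intro g x
    have hx : x ∈ closure (Set.range fun a : A => π a Ω) := hsdense x
    refine Set.EqOn.closure (s := Set.range fun a : A => π a Ω)
      (f := fun y => ‖W0 g y‖) (g := fun y => ‖y‖) (fun y hy => ?_)
      ((W0 g).continuous.norm) continuous_norm hx
    obtain ⟨a, rfl⟩ := hy
    show ‖W0 g (π a Ω)‖ = ‖π a Ω‖
    rw [hW0key g a]
    exact (hSnorm g a)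
  -- the group law for W0
  have hE1 : E 1 = 1 := by
    rw [hEdef]
    simp only [inv_one, hD1, smul_zero, NormedSpace.exp_zero]
  have hW0one : W0 1 = ContinuousLinearMap.id ℂ H := by
    apply hext
    intro a
    rw [hW0key, hE1, hγ1, mul_one]
    rfl
  have hEmul : ∀ g h : G, E (g * h) = γ g (E h) * E g := by
    intro g h
    have h1 : D (g * h)⁻¹ = γ g (D h⁻¹) + D g⁻¹ := by
      have h2 := hDcocycle h⁻¹ g⁻¹
      rw [inv_inv] at h2
      rw [mul_inv_rev]
      exact h2.symm
    rw [hEdef]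
    show NormedSpace.exp (c • D (g*h)⁻¹) = γ g (NormedSpace.exp (c • D h⁻¹)) * _
    rw [h1, smul_add, NormedSpace.exp_add_of_commute, hγexp, map_smul]
    exact Commute.smul_right (Commute.smul_left (hcen g h⁻¹ (D g⁻¹)) c) c
  have hW0mul : ∀ g h : G, W0 (g * h) = (W0 g).comp (W0 h) := by
    intro g h
    apply hext
    intro a
    rw [ContinuousLinearMap.comp_apply, hW0key, hW0key, hW0key, hγmul, hEmul,
      ← mul_assoc, ← map_mul]
  -- the covariance relation for W0
  have hW0cov : ∀ (g : G) (a : A), (W0 g).comp (π a) = (π (γ g a)).comp (W0 g) := by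
    intro g a
    apply hext
    intro b
    have hπmul : ∀ x y : A, π x (π y Ω) = π (x * y) Ω := by
      intro x y
      rw [map_mul]
      rfl
    rw [ContinuousLinearMap.comp_apply, ContinuousLinearMap.comp_apply, hπmul,
      hW0key, hW0key, hπmul, map_mul (γ g), mul_assoc]
  -- assemble the unitaries
  have hinvl : ∀ (g : G) (x : H), W0 g⁻¹ (W0 g x) = x := by
    intro g x
    have h := hW0mul g⁻¹ g
    rw [inv_mul_cancel, hW0one] at h
    have := congrArg (fun T => T x) h
    simpa using this.symm
  have hinvr : ∀ (g : G) (x : H), W0 g (W0 g⁻¹ x) = x := by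
    intro g x
    have h := hW0mul g g⁻¹
    rw [mul_inv_cancel, hW0one] at h
    have := congrArg (fun T => T x) h
    simpa using this.symm
  refine ⟨fun g =>
    { toFun := W0 g
      invFun := W0 g⁻¹
      left_inv := hinvl g
      right_inv := hinvr g
      map_add' := (W0 g).map_add
      map_smul' := (W0 g).map_smul
      norm_map' := hW0norm g }, ?_, ?_, ?_⟩
  · intro g a
    exact hW0key g a
  · intro g h x
    have := congrArg (fun T => T x) (hW0mul g h)
    simpa using this
  · intro g a x
    show W0 g (π a (W0 g⁻¹ x)) = π (γ g a) x
    have h := congrArg (fun T => T (W0 g⁻¹ x)) (hW0cov g a)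
    simp only [ContinuousLinearMap.comp_apply] at h
    rw [h, hinvr g x]
end

section
/- In the setting of an étale groupoid 𝒢 with unit space 𝒢⁽⁰⁾: let f, k ∈ C_c(𝒢) with f supported in an open bisection W. Then for x ∈ 𝒢⁽⁰⁾ and g ∈ 𝒢 with s(g) = r(g) = x: if x = s(h) for the (unique) h ∈ W with s(h) = x, then (f* * k * f)(g) = |f(h)|² k(h g h⁻¹), and if x ∉ s(W) then (f* * k * f)(g) = 0. -/
/-- A locally compact second countable Hausdorff étale groupoid, encoded with total
source, range, inverse and a (total) multiplication map which is only required to behave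
on composable pairs (`src g = rng h`). -/
structure EtaleGroupoidData (G : Type*) [TopologicalSpace G] where
  src : G → G
  rng : G → G
  mul : G → G → G
  inv : G → G
  src_src : ∀ g, src (src g) = src g
  rng_src : ∀ g, rng (src g) = src g
  src_rng : ∀ g, src (rng g) = rng g
  rng_rng : ∀ g, rng (rng g) = rng g
  rng_mul : ∀ g h, src g = rng h → rng (mul g h) = rng g
  src_mul : ∀ g h, src g = rng h → src (mul g h) = src h
  mul_assoc' : ∀ g h k, src g = rng h → src h = rng k →
    mul (mul g h) k = mul g (mul h k)
  mul_src : ∀ g, mul g (src g) = g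
  rng_mul_self : ∀ g, mul (rng g) g = g
  src_inv : ∀ g, src (inv g) = rng g
  rng_inv : ∀ g, rng (inv g) = src g
  inv_mul : ∀ g, mul (inv g) g = src g
  mul_inv : ∀ g, mul g (inv g) = rng g
  continuous_rng : Continuous rng
  continuous_inv : Continuous inv
  etale_src : IsLocalHomeomorph src
  etale_rng : IsLocalHomeomorph rng

/-- The convolution product `(f₁ * f₂)(g) = Σ_{h : r(h) = r(g)} f₁(h) f₂(h⁻¹ g)`. -/
noncomputable def groupoidConv {G : Type*} [TopologicalSpace G]
    (𝒢 : EtaleGroupoidData G) (f₁ f₂ : G → ℂ) (g : G) : ℂ :=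
  ∑ᶠ h ∈ {h : G | 𝒢.rng h = 𝒢.rng g}, f₁ h * f₂ (𝒢.mul (𝒢.inv h) g)

/-- The involution `f*(g) = conj (f (g⁻¹))`. -/
noncomputable def groupoidStar {G : Type*} [TopologicalSpace G]
    (𝒢 : EtaleGroupoidData G) (f : G → ℂ) (g : G) : ℂ :=
  (starRingEnd ℂ) (f (𝒢.inv g))

theorem finsum_mem_eq_single' {α M : Type*} [AddCommMonoid M] (f : α → M) (s : Set α) (a : α)
    (ha : a ∈ s) (h : ∀ b ∈ s, b ≠ a → f b = 0) : ∑ᶠ i ∈ s, f i = f a := by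
  rw [finsum_mem_def, finsum_eq_single _ a]
  · simp [Set.indicator_of_mem ha]
  · intro x hx
    by_cases hxs : x ∈ s
    · simp [Set.indicator_of_mem hxs, h x hxs hx]
    · simp [Set.indicator_of_notMem hxs]

theorem EtaleGroupoidData.inv_inv {G : Type*} [TopologicalSpace G]
    (𝒢 : EtaleGroupoidData G) (g : G) : 𝒢.inv (𝒢.inv g) = g := by
  calc 𝒢.inv (𝒢.inv g)
      = 𝒢.mul (𝒢.inv (𝒢.inv g)) (𝒢.src (𝒢.inv (𝒢.inv g))) := (𝒢.mul_src _).symm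
    _ = 𝒢.mul (𝒢.inv (𝒢.inv g)) (𝒢.mul (𝒢.inv g) g) := by
        rw [𝒢.src_inv, 𝒢.rng_inv, 𝒢.inv_mul]
    _ = 𝒢.mul (𝒢.mul (𝒢.inv (𝒢.inv g)) (𝒢.inv g)) g :=
        (𝒢.mul_assoc' _ _ _ (𝒢.src_inv _) (𝒢.src_inv _)).symm
    _ = g := by rw [𝒢.inv_mul, 𝒢.src_inv, 𝒢.rng_mul_self]

/-- let `f, k ∈ C_c(𝒢)` with `f` supported in an open bisection `W`.  Then
for a unit `x` and `g` with `s(g) = r(g) = x`: if `x = s(h)` for the (unique) `h ∈ W` with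
`s(h) = x`, then `(f* * k * f)(g) = |f(h)|² k(h g h⁻¹)`, and if `x ∉ s(W)` then
`(f* * k * f)(g) = 0`. -/
theorem stmt8 {G : Type*} [TopologicalSpace G] [T2Space G] [LocallyCompactSpace G]
    [SecondCountableTopology G]
    (𝒢 : EtaleGroupoidData G)
    (f k : G → ℂ)
    (hfc : Continuous f) (hfs : HasCompactSupport f)
    (hkc : Continuous k) (hks : HasCompactSupport k)
    (W : Set G) (hWopen : IsOpen W)
    (hWsrc : Set.InjOn 𝒢.src W) (hWrng : Set.InjOn 𝒢.rng W)
    (hfW : ∀ g ∉ W, f g = 0)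
    (x g : G) (hx : 𝒢.src x = x) (hsg : 𝒢.src g = x) (hrg : 𝒢.rng g = x) :
    (∀ h ∈ W, 𝒢.src h = x →
      groupoidConv 𝒢 (groupoidStar 𝒢 f) (groupoidConv 𝒢 k f) g =
        (starRingEnd ℂ) (f h) * f h * k (𝒢.mul (𝒢.mul h g) (𝒢.inv h))) ∧
    (x ∉ 𝒢.src '' W →
      groupoidConv 𝒢 (groupoidStar 𝒢 f) (groupoidConv 𝒢 k f) g = 0) := by
  constructor
  · intro h hhW hsh
    set m := 𝒢.mul h g with hm
    set h₀ := 𝒢.mul m (𝒢.inv h) with hh₀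
    have hcomp_hg : 𝒢.src h = 𝒢.rng g := by rw [hsh, hrg]
    have hrm : 𝒢.rng m = 𝒢.rng h := 𝒢.rng_mul h g hcomp_hg
    have hsm : 𝒢.src m = x := by rw [hm, 𝒢.src_mul h g hcomp_hg, hsg]
    have hcomp_m : 𝒢.src m = 𝒢.rng (𝒢.inv h) := by rw [hsm, 𝒢.rng_inv, hsh]
    have hrh₀ : 𝒢.rng h₀ = 𝒢.rng m := 𝒢.rng_mul m _ hcomp_m
    have hsh₀ : 𝒢.src h₀ = 𝒢.rng h := by rw [hh₀, 𝒢.src_mul m _ hcomp_m, 𝒢.src_inv]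
    have outer : groupoidConv 𝒢 (groupoidStar 𝒢 f) (groupoidConv 𝒢 k f) g
        = groupoidStar 𝒢 f (𝒢.inv h) *
          groupoidConv 𝒢 k f (𝒢.mul (𝒢.inv (𝒢.inv h)) g) := by
      rw [groupoidConv]
      apply finsum_mem_eq_single'
      · show 𝒢.rng (𝒢.inv h) = 𝒢.rng g
        rw [𝒢.rng_inv, hsh, hrg]
      · intro b hb hbne
        by_contra hne0
        have hf : f (𝒢.inv b) ≠ 0 := by
          intro h0
          exact hne0 (by simp [groupoidStar, h0])
        have hWb : 𝒢.inv b ∈ W := by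
          by_contra hc; exact hf (hfW _ hc)
        have hbh : 𝒢.inv b = h := by
          apply hWsrc hWb hhW
          rw [Set.mem_setOf_eq] at hb
          rw [𝒢.src_inv, hb, hrg, hsh]
        exact hbne (by rw [← 𝒢.inv_inv b, hbh])
    have hmulh₀h : 𝒢.mul h₀ h = m := by
      rw [hh₀, 𝒢.mul_assoc' _ _ _ hcomp_m (𝒢.src_inv h), 𝒢.inv_mul, hsh, ← hsm,
        𝒢.mul_src]
    have inner : groupoidConv 𝒢 k f m = k h₀ * f (𝒢.mul (𝒢.inv h₀) m) := by
      rw [groupoidConv]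
      apply finsum_mem_eq_single'
      · exact hrh₀
      · intro b hb hbne
        rw [Set.mem_setOf_eq] at hb
        by_contra hne0
        have hf : f (𝒢.mul (𝒢.inv b) m) ≠ 0 := fun h0 => hne0 (by rw [h0, mul_zero])
        set u := 𝒢.mul (𝒢.inv b) m with hu
        have hcomp_b : 𝒢.src (𝒢.inv b) = 𝒢.rng m := by rw [𝒢.src_inv, hb]
        have hWu : u ∈ W := by by_contra hc; exact hf (hfW _ hc)
        have huh : u = h := by
          apply hWsrc hWu hhW
          rw [hu, 𝒢.src_mul _ _ hcomp_b, hsm, hsh]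
        have hsb : 𝒢.src b = 𝒢.rng h := by
          rw [← huh, hu, 𝒢.rng_mul _ _ hcomp_b, 𝒢.rng_inv]
        have hbh : 𝒢.mul b h = m := by
          rw [← huh, hu, ← 𝒢.mul_assoc' b (𝒢.inv b) m (𝒢.rng_inv b).symm hcomp_b,
            𝒢.mul_inv, hb, 𝒢.rng_mul_self]
        apply hbne
        rw [hh₀, ← hbh, 𝒢.mul_assoc' b h (𝒢.inv h) hsb (𝒢.rng_inv h).symm,
          𝒢.mul_inv, ← hsb, 𝒢.mul_src]
    have hfinal : 𝒢.mul (𝒢.inv h₀) m = h := by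
      rw [← hmulh₀h, ← 𝒢.mul_assoc' (𝒢.inv h₀) h₀ h (𝒢.src_inv h₀) hsh₀,
        𝒢.inv_mul, hsh₀, 𝒢.rng_mul_self]
    rw [outer, 𝒢.inv_inv, ← hm, inner, hfinal]
    simp only [groupoidStar, 𝒢.inv_inv]
    ring
  · intro hxW
    rw [groupoidConv]
    apply finsum_mem_of_eqOn_zero
    intro b hb
    rw [Set.mem_setOf_eq] at hb
    have hfb : f (𝒢.inv b) = 0 := by
      by_contra hc
      have hWb : 𝒢.inv b ∈ W := by by_contra hw; exact hc (hfW _ hw)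
      exact hxW ⟨𝒢.inv b, hWb, by rw [𝒢.src_inv, hb, hrg]⟩
    simp [groupoidStar, hfb]
end

section
/- Let τ ∈ T_β(A) and suppose F₁, F₂ : B → π_τ(A)'' are completely positive contractions with F₁|_A = F₂|_A = π_τ and τ̄ ∘ F₁ = τ̄ ∘ F₂, where τ̄ is the faithful normal trace on π_τ(A)'' induced by the GNS vector. Then F₁ = F₂. -/
open Filter Topology

/-- The commutant of a set of bounded operators. -/
def opCommutant {H : Type*} [NormedAddCommGroup H] [InnerProductSpace ℂ H]
    (S : Set (H →L[ℂ] H)) : Set (H →L[ℂ] H) :=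
  {x | ∀ y ∈ S, x * y = y * x}

open scoped InnerProductSpace

section AuxCP

variable {B : Type*} [NormedRing B] [StarRing B] [NormedAlgebra ℂ B] [StarModule ℂ B]
    {H : Type*} [NormedAddCommGroup H] [InnerProductSpace ℂ H]

lemma aux_herm (F : B →ₗ[ℂ] (H →L[ℂ] H))
    (hcp : ∀ (n : ℕ) (b : Fin n → B) (ξ : Fin n → H),
      0 ≤ (∑ i, ∑ j, (inner ℂ (ξ i) (F (star (b i) * b j) (ξ j)) : ℂ)).re ∧
      (∑ i, ∑ j, (inner ℂ (ξ i) (F (star (b i) * b j) (ξ j)) : ℂ)).im = 0)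
    (x y : B) (ξ η : H) :
    (inner ℂ η (F (star x * y) ξ) : ℂ) = starRingEnd ℂ (inner ℂ ξ (F (star y * x) η)) := by
  have him : ∀ z : B, ∀ v : H, (inner ℂ v (F (star z * z) v) : ℂ).im = 0 := by
    intro z v
    have h := (hcp 1 ![z] ![v]).2
    simpa using h
  have key : ∀ v : H, ((inner ℂ v (F (star x * y) ξ) : ℂ) + (inner ℂ ξ (F (star y * x) v) : ℂ)).im = 0 := by
    intro v
    have h := (hcp 2 ![x, y] ![v, ξ]).2
    simp [Fin.sum_univ_two] at h
    have h1 := him x v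
    have h2 := him y ξ
    simp [Complex.add_im] at h ⊢
    linarith
  have k1 := key η
  have k2 := key ((Complex.I : ℂ) • η)
  set c : ℂ := inner ℂ η (F (star x * y) ξ) with hc
  set d : ℂ := inner ℂ ξ (F (star y * x) η) with hd
  have e2 : ((inner ℂ ((Complex.I : ℂ) • η) (F (star x * y) ξ) : ℂ) + (inner ℂ ξ (F (star y * x) ((Complex.I : ℂ) • η)) : ℂ)) = -Complex.I * c + Complex.I * d := by
    rw [inner_smul_left, map_smul, inner_smul_right]
    simp [Complex.conj_I, hc, hd]
    try ring
  rw [e2] at k2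
  apply Complex.ext
  · have := k2
    simp [Complex.add_im, Complex.mul_im, Complex.mul_re] at this
    simp [Complex.conj_re]
    linarith
  · simp [Complex.add_im] at k1
    simp [Complex.conj_im]
    linarith

lemma aux_mul_left [CompleteSpace H] (A : StarSubalgebra ℂ B) (πτ : ↥A →⋆ₐ[ℂ] (H →L[ℂ] H))
    (F : B →ₗ[ℂ] (H →L[ℂ] H))
    (hcp : ∀ (n : ℕ) (b : Fin n → B) (ξ : Fin n → H),
      0 ≤ (∑ i, ∑ j, (inner ℂ (ξ i) (F (star (b i) * b j) (ξ j)) : ℂ)).re ∧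
      (∑ i, ∑ j, (inner ℂ (ξ i) (F (star (b i) * b j) (ξ j)) : ℂ)).im = 0)
    (hherm : ∀ (x y : B) (ξ η : H),
      (inner ℂ η (F (star x * y) ξ) : ℂ) = starRingEnd ℂ (inner ℂ ξ (F (star y * x) η)))
    (hres : ∀ a : ↥A, F (a : B) = πτ a)
    (a : ↥A) (x : B) : F ((a : B) * x) = (πτ a).comp (F x) := by
  have herm2 : ∀ (z : B) (v w : H),
      (inner ℂ v (F (star z) w) : ℂ) = starRingEnd ℂ (inner ℂ w (F z v)) := by
    intro z v w
    have := hherm z 1 w v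
    simpa using this
  have hF1 : F (1 : B) = 1 := by
    have h : ((1 : ↥A) : B) = (1 : B) := rfl
    rw [← h, hres]; simp
  have hFsa : F (star (a : B)) = πτ (star a) := by
    have h : ((star a : ↥A) : B) = star (a : B) := rfl
    rw [← h, hres]
  have hFaa : F ((a : B) * star (a : B)) = (πτ a).comp (πτ (star a)) := by
    have h : ((a * star a : ↥A) : B) = (a : B) * star (a : B) := rfl
    rw [← h, hres]; simp; rfl
  have hadj : ∀ v w : H, (inner ℂ ((πτ (star a)) v) w : ℂ) = inner ℂ v ((πτ a) w) := by
    intro v w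
    have h1 : πτ (star a) = star (πτ a) := map_star πτ a
    rw [h1, ContinuousLinearMap.star_eq_adjoint, ContinuousLinearMap.adjoint_inner_left]
  ext ξ
  apply ext_inner_left ℂ
  intro η
  set c1 : ℂ := inner ℂ η (F ((a : B) * x) ξ) with hc1
  set c2 : ℂ := inner ℂ η ((πτ a) ((F x) ξ)) with hc2
  set K : ℂ := inner ℂ ξ (F (star x * x) ξ) with hK
  have hKre : 0 ≤ K.re := by
    have h := (hcp 1 ![x] ![ξ]).1
    simpa [hK] using h
  set c : ℂ := c1 - c2 with hc
  have quad : ∀ t : ℂ, 0 ≤ (t * c + starRingEnd ℂ (t * c) + (starRingEnd ℂ t * t) * K).re := by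
    intro t
    have h := (hcp 3 ![star (a : B), 1, x] ![η, -((πτ (star a)) η), t • ξ]).1
    have hsum : (∑ i, ∑ j, (inner ℂ ((![η, -((πτ (star a)) η), t • ξ]) i)
        (F (star ((![star (a : B), 1, x]) i) * (![star (a : B), 1, x]) j)
          ((![η, -((πτ (star a)) η), t • ξ]) j)) : ℂ))
        = t * c + starRingEnd ℂ (t * c) + (starRingEnd ℂ t * t) * K := by
      have t00 : (inner ℂ η (F ((a:B) * star (a:B)) η) : ℂ)
          = inner ℂ η ((πτ a) ((πτ (star a)) η)) := by rw [hFaa]; rfl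
      have t02 : (inner ℂ η (F ((a:B) * x) (t • ξ)) : ℂ) = t * c1 := by
        rw [map_smul, inner_smul_right, hc1]
      have t12 : (inner ℂ ((πτ (star a)) η) ((F x) (t • ξ)) : ℂ) = t * c2 := by
        rw [map_smul, inner_smul_right, hadj, hc2]
      have t20 : (inner ℂ ξ (F (star x * star (a:B)) η) : ℂ) = starRingEnd ℂ c1 := by
        have h : star x * star (a : B) = star ((a:B) * x) := by rw [star_mul]
        rw [h, herm2, hc1]
      have t21 : (inner ℂ ξ ((F (star x)) ((πτ (star a)) η)) : ℂ) = starRingEnd ℂ c2 := by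
        rw [herm2, hc2]
        congr 1
        exact hadj η ((F x) ξ)
      simp only [Fin.sum_univ_three, Matrix.cons_val_zero, Matrix.cons_val_one,
        Matrix.head_cons, Matrix.cons_val_two, Matrix.tail_cons, star_star, star_one,
        one_mul, mul_one, hF1, hFsa, hFaa, hres, map_neg, map_smul, inner_neg_neg,
        inner_neg_left, inner_neg_right, inner_smul_left, inner_smul_right,
        ContinuousLinearMap.one_apply, ContinuousLinearMap.comp_apply,
        ContinuousLinearMap.neg_apply, ContinuousLinearMap.smul_apply]
      rw [t20, t21, hadj η ((F x) ξ), ← hc2, ← hK, hc]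
      simp only [map_mul, map_sub]
      ring
    rw [hsum] at h
    exact h
  have hc0 : c = 0 := by
    by_contra hne
    have hns : 0 < Complex.normSq c := by
      simpa [Complex.normSq_pos] using hne
    set N := Complex.normSq c with hN
    have key : ∀ s : ℝ, 0 ≤ -2 * s * N + s ^ 2 * N * K.re := by
      intro s
      have h := quad (-(s : ℂ) * starRingEnd ℂ c)
      have hcc : c * starRingEnd ℂ c = (N : ℂ) := Complex.mul_conj c
      have eX : (-(s:ℂ) * starRingEnd ℂ c) * c
            + starRingEnd ℂ ((-(s:ℂ) * starRingEnd ℂ c) * c)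
            + (starRingEnd ℂ (-(s:ℂ) * starRingEnd ℂ c) * (-(s:ℂ) * starRingEnd ℂ c)) * K
          = ((-2 * s * N : ℝ) : ℂ) + ((s ^ 2 * N : ℝ) : ℂ) * K := by
        simp only [map_mul, map_neg, Complex.conj_conj, Complex.conj_ofReal]
        push_cast
        linear_combination (-2 * (s:ℂ) + (s:ℂ)^2 * K) * hcc
      rw [eX] at h
      simp only [Complex.add_re, Complex.mul_re, Complex.ofReal_re, Complex.ofReal_im,
        zero_mul, sub_zero] at h
      linarith
    set s := 1 / (K.re + 1) with hs
    have hspos : 0 < s := by positivity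
    have h1 := key s
    have h2 : s * K.re < 1 := by
      rw [hs, div_mul_eq_mul_div, div_lt_one (by linarith)]
      linarith
    have h3 : 0 < s * N * (1 - s * K.re) :=
      mul_pos (mul_pos hspos hns) (by linarith)
    nlinarith [h1, h3, mul_pos hspos hns]
  have hfin : c1 = c2 := by rwa [hc, sub_eq_zero] at hc0
  simpa [hc1, hc2] using hfin

lemma aux_mul_right [CompleteSpace H] (A : StarSubalgebra ℂ B) (πτ : ↥A →⋆ₐ[ℂ] (H →L[ℂ] H))
    (F : B →ₗ[ℂ] (H →L[ℂ] H))
    (hherm : ∀ (x y : B) (ξ η : H),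
      (inner ℂ η (F (star x * y) ξ) : ℂ) = starRingEnd ℂ (inner ℂ ξ (F (star y * x) η)))
    (hmul : ∀ (a : ↥A) (x : B), F ((a : B) * x) = (πτ a).comp (F x))
    (a : ↥A) (x : B) (ξ η : H) :
    (inner ℂ η (F (x * (a : B)) ξ) : ℂ) = inner ℂ η ((F x) ((πτ a) ξ)) := by
  have herm2 : ∀ (z : B) (v w : H),
      (inner ℂ v (F (star z) w) : ℂ) = starRingEnd ℂ (inner ℂ w (F z v)) := by
    intro z v w
    have := hherm z 1 w v
    simpa using this
  have h2 : star (x * (a : B)) = ((star a : ↥A) : B) * star x := by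
    rw [star_mul]; rfl
  have h3 : F (((star a : ↥A) : B) * star x) = (πτ (star a)).comp (F (star x)) :=
    hmul (star a) (star x)
  have h4 : (inner ℂ ξ ((πτ (star a)) ((F (star x)) η)) : ℂ)
      = inner ℂ ((πτ a) ξ) ((F (star x)) η) := by
    have h1 : πτ (star a) = star (πτ a) := map_star πτ a
    rw [h1, ContinuousLinearMap.star_eq_adjoint,
      ContinuousLinearMap.adjoint_inner_right]
  calc (inner ℂ η (F (x * (a:B)) ξ) : ℂ)
      = starRingEnd ℂ (starRingEnd ℂ (inner ℂ η (F (x * (a:B)) ξ))) := (Complex.conj_conj _).symm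
    _ = starRingEnd ℂ (inner ℂ ξ (F (star (x * (a:B))) η)) := by rw [herm2]
    _ = starRingEnd ℂ (inner ℂ ((πτ a) ξ) ((F (star x)) η)) := by
        rw [h2, h3]
        rw [ContinuousLinearMap.comp_apply, h4]
    _ = starRingEnd ℂ (starRingEnd ℂ (inner ℂ η ((F x) ((πτ a) ξ)))) := by rw [herm2]
    _ = inner ℂ η ((F x) ((πτ a) ξ)) := Complex.conj_conj _

end AuxCP


/-- Let `τ ∈ T_β(A)` and suppose `F₁, F₂ : B → π_τ(A)''` are completely
positive contractions with `F₁|_A = F₂|_A = π_τ` and `τ̄ ∘ F₁ = τ̄ ∘ F₂`.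
Then `F₁ = F₂`. -/
theorem stmt11 {B : Type*} [NormedRing B] [StarRing B] [CStarRing B]
    [NormedAlgebra ℂ B] [CompleteSpace B] [StarModule ℂ B]
    -- the flow
    (α : ℝ → (B →⋆ₐ[ℂ] B))
    (hα0 : α 0 = StarAlgHom.id ℂ B)
    (hαadd : ∀ s t : ℝ, (α (s + t)) = (α s).comp (α t))
    (hαcont : ∀ x : B, Continuous fun t => α t x)
    -- the α-regular subalgebra A
    (A : StarSubalgebra ℂ B) (hAclosed : IsClosed (A : Set B))
    (Nα : Set B)
    (hNα : Nα = {b : B | (∃ F : ℂ → B, Differentiable ℂ F ∧ ∀ t : ℝ, F (t : ℂ) = α t b) ∧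
      ∀ t : ℝ, ∀ x ∈ A, (α t b * x * star b ∈ A ∧ star b * x * α t b ∈ A)})
    (happrox : ∃ (ι : Type) (l : Filter ι) (e : ι → B), l.NeBot ∧ (∀ i, e i ∈ A) ∧
      ∀ x : B, Tendsto (fun i => e i * x) l (𝓝 x) ∧ Tendsto (fun i => x * e i) l (𝓝 x))
    (hAfix : ∀ t : ℝ, ∀ x ∈ A, α t x = x)
    (hgen : (Submodule.span ℂ Nα).topologicalClosure = ⊤)
    (β : ℝ)
    -- τ is an (α,β)-conformal trace state on A
    (τ : ↥A →L[ℂ] ℂ) (hτnorm : ‖τ‖ = 1)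
    (hτpos : ∀ x : ↥A, 0 ≤ (τ (star x * x)).re ∧ (τ (star x * x)).im = 0)
    (hτtrace : ∀ x y : ↥A, τ (x * y) = τ (y * x))
    (hconf : ∀ b ∈ Nα, ∀ F : ℂ → B, Differentiable ℂ F → (∀ t : ℝ, F (t : ℂ) = α t b) →
      ∀ a c : ↥A,
      ∀ (h₁ : b * (a : B) * star b * (c : B) ∈ A)
        (h₂ : (a : B) * star b * (c : B) * F (Complex.I * β) ∈ A),
        τ ⟨b * (a : B) * star b * (c : B), h₁⟩ =
          τ ⟨(a : B) * star b * (c : B) * F (Complex.I * β), h₂⟩)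
    -- GNS representation of τ
    {Hτ : Type*} [NormedAddCommGroup Hτ] [InnerProductSpace ℂ Hτ] [CompleteSpace Hτ]
    (πτ : ↥A →⋆ₐ[ℂ] (Hτ →L[ℂ] Hτ)) (Ωτ : Hτ)
    (hGNSτ : ∀ a : ↥A, (inner ℂ Ωτ (πτ a Ωτ) : ℂ) = τ a)
    (hcycτ : (Submodule.span ℂ (Set.range fun a : ↥A => πτ a Ωτ)).topologicalClosure = ⊤)
    -- the two completely positive contractions F₁, F₂ : B → π_τ(A)''
    (F₁ F₂ : B →ₗ[ℂ] (Hτ →L[ℂ] Hτ))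
    (hrange₁ : ∀ x : B, F₁ x ∈ opCommutant (opCommutant (Set.range πτ)))
    (hrange₂ : ∀ x : B, F₂ x ∈ opCommutant (opCommutant (Set.range πτ)))
    (hcontr₁ : ∀ x : B, ‖F₁ x‖ ≤ ‖x‖) (hcontr₂ : ∀ x : B, ‖F₂ x‖ ≤ ‖x‖)
    (hcp₁ : ∀ (n : ℕ) (b : Fin n → B) (ξ : Fin n → Hτ),
      0 ≤ (∑ i, ∑ j, (inner ℂ (ξ i) (F₁ (star (b i) * b j) (ξ j)) : ℂ)).re ∧
      (∑ i, ∑ j, (inner ℂ (ξ i) (F₁ (star (b i) * b j) (ξ j)) : ℂ)).im = 0)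
    (hcp₂ : ∀ (n : ℕ) (b : Fin n → B) (ξ : Fin n → Hτ),
      0 ≤ (∑ i, ∑ j, (inner ℂ (ξ i) (F₂ (star (b i) * b j) (ξ j)) : ℂ)).re ∧
      (∑ i, ∑ j, (inner ℂ (ξ i) (F₂ (star (b i) * b j) (ξ j)) : ℂ)).im = 0)
    -- both restrict to π_τ on A
    (hres₁ : ∀ a : ↥A, F₁ (a : B) = πτ a)
    (hres₂ : ∀ a : ↥A, F₂ (a : B) = πτ a)
    -- τ̄ ∘ F₁ = τ̄ ∘ F₂
    (hbar : ∀ x : B, (inner ℂ Ωτ (F₁ x Ωτ) : ℂ) = (inner ℂ Ωτ (F₂ x Ωτ) : ℂ)) :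
    F₁ = F₂ := by
  have herm₁ := aux_herm F₁ hcp₁
  have herm₂ := aux_herm F₂ hcp₂
  have mulL₁ := aux_mul_left A πτ F₁ hcp₁ herm₁ hres₁
  have mulL₂ := aux_mul_left A πτ F₂ hcp₂ herm₂ hres₂
  have mulR₁ := aux_mul_right A πτ F₁ herm₁ mulL₁
  have mulR₂ := aux_mul_right A πτ F₂ herm₂ mulL₂
  have key : ∀ (F : B →ₗ[ℂ] (Hτ →L[ℂ] Hτ)),
      (∀ (a : ↥A) (x : B), F ((a : B) * x) = (πτ a).comp (F x)) →
      (∀ (a : ↥A) (x : B) (ξ η : Hτ),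
        (inner ℂ η (F (x * (a : B)) ξ) : ℂ) = inner ℂ η ((F x) ((πτ a) ξ))) →
      ∀ (a c : ↥A) (x : B),
        (inner ℂ ((πτ a) Ωτ) ((F x) ((πτ c) Ωτ)) : ℂ)
          = inner ℂ Ωτ ((F (((star a : ↥A) : B) * x * (c : B))) Ωτ) := by
    intro F hmulL hmulR a c x
    have hstar : πτ (star a) = ContinuousLinearMap.adjoint (πτ a) := by
      rw [map_star, ContinuousLinearMap.star_eq_adjoint]
    have s1 : (inner ℂ ((πτ a) Ωτ) ((F x) ((πτ c) Ωτ)) : ℂ)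
        = inner ℂ Ωτ ((πτ (star a)) ((F x) ((πτ c) Ωτ))) := by
      rw [hstar, ContinuousLinearMap.adjoint_inner_right]
    rw [s1]
    have s2 : (πτ (star a)) ((F x) ((πτ c) Ωτ))
        = (F (((star a : ↥A) : B) * x)) ((πτ c) Ωτ) := by
      rw [hmulL (star a) x]; rfl
    rw [s2]
    exact (hmulR c (((star a : ↥A) : B) * x) Ωτ Ωτ).symm
  have main : ∀ x : B, F₁ x = F₂ x := by
    intro x
    set D : Hτ →L[ℂ] Hτ := F₁ x - F₂ x with hD
    set S : Submodule ℂ Hτ := Submodule.span ℂ (Set.range fun a : ↥A => πτ a Ωτ) with hS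
    have step1 : ∀ a c : ↥A, (inner ℂ ((πτ a) Ωτ) (D ((πτ c) Ωτ)) : ℂ) = 0 := by
      intro a c
      have e : D ((πτ c) Ωτ) = (F₁ x) ((πτ c) Ωτ) - (F₂ x) ((πτ c) Ωτ) := rfl
      rw [e, inner_sub_right, key F₁ mulL₁ mulR₁ a c x, key F₂ mulL₂ mulR₂ a c x,
        hbar, sub_self]
    have step2 : ∀ c : ↥A, D ((πτ c) Ωτ) = 0 := by
      intro c
      have hker : S ≤ LinearMap.ker ((innerSL ℂ (D ((πτ c) Ωτ))) : Hτ →ₗ[ℂ] ℂ) := by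
        rw [hS, Submodule.span_le]
        rintro _ ⟨a, rfl⟩
        simp only [SetLike.mem_coe, LinearMap.mem_ker]
        have h0 : (inner ℂ (D ((πτ c) Ωτ)) ((πτ a) Ωτ) : ℂ) = 0 := by
          rw [← inner_conj_symm, step1 a c, map_zero]
        exact h0
      have htop : S.topologicalClosure ≤ LinearMap.ker ((innerSL ℂ (D ((πτ c) Ωτ))) : Hτ →ₗ[ℂ] ℂ) :=
        Submodule.topologicalClosure_minimal S hker (ContinuousLinearMap.isClosed_ker _)
      have hmem : D ((πτ c) Ωτ) ∈ S.topologicalClosure := by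
        rw [hS, hcycτ]; trivial
      have h1 : (inner ℂ (D ((πτ c) Ωτ)) (D ((πτ c) Ωτ)) : ℂ) = 0 :=
        LinearMap.mem_ker.mp (htop hmem)
      exact inner_self_eq_zero.mp h1
    have hkerD : S ≤ LinearMap.ker (D : Hτ →ₗ[ℂ] Hτ) := by
      rw [hS, Submodule.span_le]
      rintro _ ⟨c, rfl⟩
      simp only [SetLike.mem_coe, LinearMap.mem_ker]
      exact step2 c
    have htopD : S.topologicalClosure ≤ LinearMap.ker (D : Hτ →ₗ[ℂ] Hτ) :=
      Submodule.topologicalClosure_minimal S hkerD (ContinuousLinearMap.isClosed_ker D)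
    have hDzero : D = 0 := by
      ext v
      have hv : v ∈ S.topologicalClosure := by rw [hS, hcycτ]; trivial
      have := LinearMap.mem_ker.mp (htopD hv)
      simpa using this
    have : F₁ x - F₂ x = 0 := hDzero
    exact sub_eq_zero.mp this
  exact LinearMap.ext main
end

section
/- Let τ ∈ ∂_e T_β(A) be an extremal (α^D, β)-conformal trace on A (for the crossed product setting with countable discrete group G). Then the induced action γ̄_g = Ad W_g of G on the center of the von Neumann algebra π_τ(A)'' is ergodic: any central element of π_τ(A)'' fixed by all γ̄_g is a scalar. -/
/-- The set `T_β(A)` of `(α^D,β)`-conformal tracial states in the crossed product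
setting: tracial states `τ` with `τ (γ_g a) = τ (a e^{β D_g})`. -/
def IsConformalTrace {A : Type*} [NormedRing A] [StarRing A] [CStarRing A]
    [NormedAlgebra ℂ A] [CompleteSpace A] [StarModule ℂ A]
    {G : Type*} [Group G] (γ : G → (A ≃⋆ₐ[ℂ] A)) (D : G → A) (β : ℝ)
    (τ : A →L[ℂ] ℂ) : Prop :=
  τ 1 = 1 ∧ (∀ x : A, 0 ≤ (τ (star x * x)).re ∧ (τ (star x * x)).im = 0) ∧
  (∀ x y : A, τ (x * y) = τ (y * x)) ∧
  (∀ (a : A) (g : G), τ (γ g a) = τ (a * NormedSpace.exp ((β : ℂ) • D g)))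


/-- Two continuous linear maps agreeing on a set whose span is dense are equal. -/
lemma auxExtOn {H F : Type*} [NormedAddCommGroup H] [InnerProductSpace ℂ H]
    [NormedAddCommGroup F] [NormedSpace ℂ F] {s : Set H}
    (hs : (Submodule.span ℂ s).topologicalClosure = ⊤)
    (T S : H →L[ℂ] F) (h : ∀ v ∈ s, T v = S v) : T = S := by
  have hd : Dense ((Submodule.span ℂ s : Submodule ℂ H) : Set H) :=
    Submodule.dense_iff_topologicalClosure_eq_top.mpr hs
  have heq : Set.EqOn ⇑T ⇑S ((Submodule.span ℂ s : Submodule ℂ H) : Set H) := by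
    intro v hv
    induction hv using Submodule.span_induction with
    | mem x hx => exact h x hx
    | zero => simp
    | add x y _ _ hx hy => simp [hx, hy]
    | smul c x _ hx => simp [hx]
  exact ContinuousLinearMap.ext fun v => congrFun (Continuous.ext_on hd T.continuous S.continuous heq) v

/-- Square root trick: `‖b‖² - b b*` is of the form `s* s`. -/
lemma auxSqrt {A : Type*} [CStarAlgebra A] (b : A) :
    ∃ s : A, star s * s = ((‖b‖ ^ 2 : ℝ) : ℂ) • (1 : A) - b * star b := by
  rcases subsingleton_or_nontrivial A with hA | hA
  · exact ⟨0, Subsingleton.elim _ _⟩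
  set x := b * star b with hxdef
  have hx : IsSelfAdjoint x := IsSelfAdjoint.mul_star_self b
  have hspec : ∀ t ∈ spectrum ℝ x, t ≤ ‖b‖ ^ 2 := by
    intro t ht
    have h1 : ‖t‖ ≤ ‖x‖ := spectrum.norm_le_norm_of_mem ht
    have h2 : ‖x‖ ≤ ‖b‖ ^ 2 := by
      calc ‖x‖ ≤ ‖b‖ * ‖star b‖ := norm_mul_le _ _
      _ = ‖b‖ ^ 2 := by rw [norm_star]; ring
    calc t ≤ |t| := le_abs_self t
    _ ≤ ‖b‖ ^ 2 := by rw [← Real.norm_eq_abs]; exact h1.trans h2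
  refine ⟨cfc (fun t : ℝ => Real.sqrt (‖b‖ ^ 2 - t)) x, ?_⟩
  have hsa : IsSelfAdjoint (cfc (fun t : ℝ => Real.sqrt (‖b‖ ^ 2 - t)) x) :=
    cfc_predicate _ x
  rw [hsa.star_eq, ← cfc_mul _ _ x]
  have : cfc (fun t : ℝ => Real.sqrt (‖b‖ ^ 2 - t) * Real.sqrt (‖b‖ ^ 2 - t)) x
      = cfc (fun t : ℝ => ‖b‖ ^ 2 - t) x := by
    apply cfc_congr
    intro t ht
    exact Real.mul_self_sqrt (by linarith [hspec t ht])
  rw [this, cfc_sub _ _ x, cfc_const _ x, cfc_id' ℝ x, IsScalarTower.algebraMap_apply ℝ ℂ A,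
    Algebra.algebraMap_eq_smul_one]
  norm_cast

/-- Right multiplication operators on the GNS space. -/
lemma auxRho {A : Type*} [CStarAlgebra A] {H : Type*} [NormedAddCommGroup H]
    [InnerProductSpace ℂ H] [CompleteSpace H]
    (π : A →⋆ₐ[ℂ] (H →L[ℂ] H)) (Ω : H)
    (hcyc : (Submodule.span ℂ (Set.range fun a : A => π a Ω)).topologicalClosure = ⊤)
    (hbound : ∀ b c : A, ‖π (c * b) Ω‖ ≤ ‖b‖ * ‖π c Ω‖) (b : A) :
    ∃ ρ : H →L[ℂ] H, ∀ c : A, ρ (π c Ω) = π (c * b) Ω := by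
  classical
  set Pl : A →ₗ[ℂ] H :=
    { toFun := fun a => π a Ω
      map_add' := by intro x y; simp [map_add]
      map_smul' := by intro c x; simp [map_smul] } with hPl
  set R : A →ₗ[ℂ] H :=
    { toFun := fun c => π (c * b) Ω
      map_add' := by intro x y; simp [add_mul, map_add]
      map_smul' := by intro c x; simp [smul_mul_assoc, map_smul] } with hR
  have hker : LinearMap.ker Pl ≤ LinearMap.ker R := by
    intro c hc
    have hc' : π c Ω = 0 := hc
    have : ‖π (c * b) Ω‖ ≤ ‖b‖ * ‖π c Ω‖ := hbound b c
    rw [hc', norm_zero, mul_zero] at this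
    exact norm_le_zero_iff.mp this
  set q : (A ⧸ LinearMap.ker Pl) →ₗ[ℂ] H := Submodule.liftQ _ R hker with hq
  set eqv := Pl.quotKerEquivRange with heqv
  set f₀ : LinearMap.range Pl →ₗ[ℂ] H := q.comp (eqv.symm : _ ≃ₗ[ℂ] _).toLinearMap with hf₀
  have fact : ∀ c : A, f₀ ⟨Pl c, LinearMap.mem_range_self _ c⟩ = π (c * b) Ω := by
    intro c
    have h1 : eqv (Submodule.Quotient.mk c) = ⟨Pl c, LinearMap.mem_range_self _ c⟩ := by
      apply Subtype.ext
      simp [heqv, LinearMap.quotKerEquivRange]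
    have h2 : eqv.symm ⟨Pl c, LinearMap.mem_range_self _ c⟩ = Submodule.Quotient.mk c := by
      rw [← h1, LinearEquiv.symm_apply_apply]
    simp only [hf₀, LinearMap.comp_apply, LinearEquiv.coe_toLinearMap, h2]
    rfl
  have bound : ∀ v : LinearMap.range Pl, ‖f₀ v‖ ≤ ‖b‖ * ‖v‖ := by
    rintro ⟨w, hw⟩
    obtain ⟨c, rfl⟩ := hw
    have : (⟨Pl c, LinearMap.mem_range_self _ c⟩ : LinearMap.range Pl) = ⟨Pl c, _⟩ := rfl
    rw [show (⟨Pl c, ⟨c, rfl⟩⟩ : LinearMap.range Pl)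
        = ⟨Pl c, LinearMap.mem_range_self _ c⟩ from rfl, fact c]
    have : ‖(⟨Pl c, LinearMap.mem_range_self _ c⟩ : LinearMap.range Pl)‖ = ‖π c Ω‖ := rfl
    rw [this]
    exact hbound b c
  set f : LinearMap.range Pl →L[ℂ] H := LinearMap.mkContinuous f₀ ‖b‖ bound with hf
  have hrange : Submodule.span ℂ (Set.range fun a : A => π a Ω) = LinearMap.range Pl := by
    apply le_antisymm
    · rw [Submodule.span_le]
      rintro w ⟨c, rfl⟩
      exact ⟨c, rfl⟩
    · rintro w hw
      obtain ⟨c, hc⟩ := hw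
      exact Submodule.subset_span ⟨c, hc⟩
  have hdense : DenseRange ⇑(LinearMap.range Pl).subtypeL := by
    have hd : Dense ((LinearMap.range Pl : Submodule ℂ H) : Set H) := by
      rw [← hrange]
      exact Submodule.dense_iff_topologicalClosure_eq_top.mpr hcyc
    show Dense (Set.range ((↑) : LinearMap.range Pl → H))
    rw [Subtype.range_coe]
    exact hd
  have hui : IsUniformInducing ⇑(LinearMap.range Pl).subtypeL :=
    Isometry.isUniformInducing (isometry_subtype_coe)
  refine ⟨f.extend (LinearMap.range Pl).subtypeL, fun c => ?_⟩
  have h3 : π c Ω = (LinearMap.range Pl).subtypeL ⟨Pl c, LinearMap.mem_range_self _ c⟩ := rfl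
  rw [h3, ContinuousLinearMap.extend_eq f hdense hui]
  rw [hf]
  rw [LinearMap.mkContinuous_apply]
  exact fact c


set_option maxHeartbeats 2000000 in
/-- Let `τ ∈ ∂_e T_β(A)` be an extremal `(α^D, β)`-conformal trace on `A`
(crossed product setting, countable discrete `G`).  Then the induced action
`γ̄_g = Ad W_g` of `G` on the center of `π_τ(A)''` is ergodic: any central element of
`π_τ(A)''` fixed by all `γ̄_g` is a scalar. -/
theorem stmt12 {A : Type*} [NormedRing A] [StarRing A] [CStarRing A]
    [NormedAlgebra ℂ A] [CompleteSpace A] [StarModule ℂ A]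
    [TopologicalSpace.SeparableSpace A]
    {G : Type*} [Group G] [Countable G]
    (γ : G → (A ≃⋆ₐ[ℂ] A))
    (hγ1 : ∀ x : A, γ 1 x = x)
    (hγmul : ∀ (g h : G) (x : A), γ (g * h) x = γ g (γ h x))
    (D : G → A)
    (hDsa : ∀ g, star (D g) = D g)
    (hDcentral : ∀ g, ∀ x : A, D g * x = x * D g)
    (hDcocycle : ∀ g h : G, γ h⁻¹ (D g) + D h = D (g * h))
    (β : ℝ)
    -- τ is an extremal conformal trace
    (τ : A →L[ℂ] ℂ)
    (hτ : IsConformalTrace γ D β τ)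
    (hext : ∀ τ₁ τ₂ : A →L[ℂ] ℂ, IsConformalTrace γ D β τ₁ →
      IsConformalTrace γ D β τ₂ → ∀ t : ℝ, 0 < t → t < 1 →
      τ = ((t : ℂ) • τ₁ + (((1 - t : ℝ) : ℂ)) • τ₂) → τ₁ = τ ∧ τ₂ = τ)
    -- GNS representation of τ
    {H : Type*} [NormedAddCommGroup H] [InnerProductSpace ℂ H] [CompleteSpace H]
    (π : A →⋆ₐ[ℂ] (H →L[ℂ] H)) (Ω : H)
    (hGNS : ∀ a : A, (inner ℂ Ω (π a Ω) : ℂ) = τ a)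
    (hcyc : (Submodule.span ℂ (Set.range fun a : A => π a Ω)).topologicalClosure = ⊤)
    -- the unitary representation W implementing γ̄
    (W : G → (H →L[ℂ] H))
    (hWunit : ∀ g : G, star (W g) * W g = 1 ∧ W g * star (W g) = 1)
    (hWcov : ∀ (g : G) (a : A), W g * π a * star (W g) = π (γ g a))
    (hWΩ : ∀ (g : G) (a : A),
      W g (π a Ω) = π (γ g a * NormedSpace.exp (((β / 2 : ℝ) : ℂ) • D g⁻¹)) Ω) :
    -- ergodicity of γ̄ on the center of π_τ(A)''
    ∀ z ∈ opCommutant (opCommutant (Set.range π)),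
      (∀ y ∈ opCommutant (opCommutant (Set.range π)), z * y = y * z) →
      (∀ g : G, W g * z * star (W g) = z) →
      ∃ lam : ℂ, z = lam • (1 : H →L[ℂ] H) := by
  obtain ⟨hτ1, hτpos, hτtr, hτconf⟩ := hτ
  letI : CStarAlgebra A :=
    { ‹NormedRing A›, ‹StarRing A›, ‹CStarRing A›, ‹NormedAlgebra ℂ A›, ‹StarModule ℂ A›,
      ‹CompleteSpace A› with }
  letI : NormedAlgebra ℚ A := NormedAlgebra.restrictScalars ℚ ℂ A
  -- adjoint facts
  have hπadj : ∀ a : A, π (star a) = ContinuousLinearMap.adjoint (π a) := fun a => by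
    rw [map_star, ContinuousLinearMap.star_eq_adjoint]
  have hinner_self : ∀ x : A, (inner ℂ (π x Ω) (π x Ω) : ℂ) = τ (star x * x) := by
    intro x
    rw [← hGNS, map_mul, ContinuousLinearMap.mul_apply, hπadj,
      ContinuousLinearMap.adjoint_inner_right]
  have hτsq : ∀ x : A, τ (star x * x) = ((‖π x Ω‖ ^ 2 : ℝ) : ℂ) := fun x => by
    rw [← hinner_self]
    exact_mod_cast inner_self_eq_norm_sq_to_K (𝕜 := ℂ) (π x Ω)
  -- the norm bound for right multiplication
  have hbound : ∀ b c : A, ‖π (c * b) Ω‖ ≤ ‖b‖ * ‖π c Ω‖ := by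
    intro b c
    obtain ⟨s, hs⟩ := auxSqrt b
    have e1 : τ (star (c * b) * (c * b)) = τ (star c * c * (b * star b)) := by
      have : star (c * b) * (c * b) = star b * (star c * c * b) := by
        simp [star_mul, mul_assoc]
      rw [this, hτtr, mul_assoc]
    have e2 : b * star b = ((‖b‖ ^ 2 : ℝ) : ℂ) • (1 : A) - star s * s := by
      rw [hs, sub_sub_cancel]
    have e3 : τ (star c * c * (b * star b))
        = ((‖b‖ ^ 2 : ℝ) : ℂ) * τ (star c * c) - τ (star (c * star s) * (c * star s)) := by
      rw [e2, mul_sub, map_sub]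
      congr 1
      · rw [mul_smul_comm, mul_one, map_smul, smul_eq_mul]
      · have h7 : star c * c * (star s * s) = (star c * c * star s) * s := by
          rw [← mul_assoc]
        have h8 : s * (star c * c * star s) = star (c * star s) * (c * star s) := by
          simp [star_mul, mul_assoc]
        rw [h7, hτtr, h8]
    have h4 := hτsq (c * b)
    have h5 := hτsq c
    have h6 := hτsq (c * star s)
    have : ((‖π (c * b) Ω‖ ^ 2 : ℝ) : ℂ)
        = ((‖b‖ ^ 2 : ℝ) : ℂ) * ((‖π c Ω‖ ^ 2 : ℝ) : ℂ) - ((‖π (c * star s) Ω‖ ^ 2 : ℝ) : ℂ) := by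
      rw [← h4, ← h5, ← h6, e1, e3]
    have hre : ‖π (c * b) Ω‖ ^ 2 = ‖b‖ ^ 2 * ‖π c Ω‖ ^ 2 - ‖π (c * star s) Ω‖ ^ 2 := by
      exact_mod_cast this
    nlinarith [norm_nonneg (π (c * star s) Ω), norm_nonneg (π (c * b) Ω),
      norm_nonneg (π c Ω), norm_nonneg b, sq_nonneg (‖b‖ * ‖π c Ω‖ - ‖π (c * b) Ω‖),
      mul_nonneg (norm_nonneg b) (norm_nonneg (π c Ω))]
  -- extension helpers
  have vecext : ∀ v w : H, (∀ c : A, (inner ℂ (π c Ω) v : ℂ) = inner ℂ (π c Ω) w) → v = w := by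
    intro v w hvw
    have h : innerSL ℂ v = innerSL ℂ w := by
      apply auxExtOn hcyc
      rintro u ⟨c, rfl⟩
      show (inner ℂ v (π c Ω) : ℂ) = inner ℂ w (π c Ω)
      rw [← inner_conj_symm, hvw c, inner_conj_symm]
    apply ext_inner_right ℂ
    intro u
    exact congrFun (congrArg (DFunLike.coe) h) u
  -- right multiplication operators
  have hrho : ∀ b : A, ∃ ρ : H →L[ℂ] H, (∀ c : A, ρ (π c Ω) = π (c * b) Ω) ∧
      (ρ ∈ opCommutant (Set.range ⇑π)) ∧
      (∀ v : H, (inner ℂ Ω (ρ v) : ℂ) = inner ℂ (π (star b) Ω) v) := by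
    intro b
    obtain ⟨ρ, hρ⟩ := auxRho π Ω hcyc hbound b
    refine ⟨ρ, hρ, ?_, ?_⟩
    · rintro y ⟨a, rfl⟩
      apply auxExtOn hcyc
      rintro v ⟨c, rfl⟩
      have e1 : (ρ * π a) ((π c) Ω) = π ((a * c) * b) Ω := by
        rw [ContinuousLinearMap.mul_apply, ← ContinuousLinearMap.mul_apply (π a) (π c),
          ← map_mul, hρ]
      have e2 : (π a * ρ) ((π c) Ω) = π (a * (c * b)) Ω := by
        rw [ContinuousLinearMap.mul_apply, hρ, ← ContinuousLinearMap.mul_apply (π a),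
          ← map_mul]
      rw [e1, e2, mul_assoc]
    · intro v
      have h : (innerSL ℂ Ω).comp ρ = innerSL ℂ (π (star b) Ω) := by
        apply auxExtOn hcyc
        rintro u ⟨c, rfl⟩
        show (inner ℂ Ω (ρ ((π c) Ω)) : ℂ) = inner ℂ (π (star b) Ω) (π c Ω)
        rw [hρ c, hGNS, hπadj, ContinuousLinearMap.adjoint_inner_left,
          ← ContinuousLinearMap.mul_apply, ← map_mul, hGNS]
        exact hτtr c b
      exact congrFun (congrArg (DFunLike.coe) h) v
  -- facts about D and exp
  have hD1 : D 1 = 0 := by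
    have h := hDcocycle 1 1
    rw [inv_one, hγ1, mul_one] at h
    exact add_eq_left.mp h
  have hDinv : ∀ g : G, γ g⁻¹ (D g⁻¹) = - D g := by
    intro g
    have h := hDcocycle g⁻¹ g
    rw [inv_mul_cancel, hD1] at h
    exact eq_neg_of_add_eq_zero_left h
  -- exp and gamma facts
  have hcommD : ∀ (c : ℂ) (g : G) (x : A), Commute (c • D g) x :=
    fun c g x => Commute.smul_left (hDcentral g x) c
  have hexpcentral : ∀ (c : ℂ) (g : G) (x : A),
      NormedSpace.exp (c • D g) * x = x * NormedSpace.exp (c • D g) :=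
    fun c g x => Commute.exp_left (hcommD c g x)
  have hexpmul : ∀ (c d : ℂ) (g : G),
      NormedSpace.exp (c • D g) * NormedSpace.exp (d • D g)
        = NormedSpace.exp ((c + d) • D g) := by
    intro c d g
    rw [add_smul,
      NormedSpace.exp_add_of_commute (((Commute.refl (D g)).smul_left c).smul_right d)]
  have hexpsa : ∀ (r : ℝ) (g : G),
      star (NormedSpace.exp ((r : ℂ) • D g)) = NormedSpace.exp ((r : ℂ) • D g) := by
    intro r g
    rw [NormedSpace.star_exp, star_smul, Complex.star_def, Complex.conj_ofReal, hDsa]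
  have hγcont : ∀ g : G, Continuous ⇑(γ g) := fun g => (StarAlgEquiv.isometry (γ g)).continuous
  have hγexp : ∀ (g : G) (x : A), γ g (NormedSpace.exp x) = NormedSpace.exp (γ g x) :=
    fun g x => NormedSpace.map_exp (γ g) (hγcont g) x
  -- selfadjoint-π inner helper
  have hπsa : ∀ p : A, star p = p → ∀ x y : H, (inner ℂ x (π p y) : ℂ) = inner ℂ (π p x) y := by
    intro p hp x y
    conv_lhs => rw [← hp, hπadj]
    rw [ContinuousLinearMap.adjoint_inner_right]
  -- key identities for the functional associated with a nice operator ζ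
  have key : ∀ ζ : H →L[ℂ] H,
      (∀ y ∈ opCommutant (Set.range ⇑π), ζ * y = y * ζ) →
      (∀ a : A, ζ * π a = π a * ζ) →
      (∀ g : G, W g * ζ * star (W g) = ζ) →
      (∀ a b : A, (inner ℂ Ω (ζ (π (a * b) Ω)) : ℂ) = inner ℂ Ω (ζ (π (b * a) Ω))) ∧
      (∀ x : A, (inner ℂ Ω (ζ (π (star x * x) Ω)) : ℂ) = inner ℂ (π x Ω) (ζ (π x Ω))) ∧
      (∀ (a : A) (g : G), (inner ℂ Ω (ζ (π (γ g a) Ω)) : ℂ)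
        = inner ℂ Ω (ζ (π (a * NormedSpace.exp ((β : ℂ) • D g)) Ω))) := by
    intro ζ h1 h2 h3
    have happ : ∀ (a : A) (v : H), ζ (π a v) = π a (ζ v) := by
      intro a v
      have := congrFun (congrArg DFunLike.coe (h2 a)) v
      simpa [ContinuousLinearMap.mul_apply] using this
    have hWcom : ∀ (g : G) (v : H), ζ (W g v) = W g (ζ v) := by
      intro g v
      have h4 : W g * ζ = ζ * W g := by
        calc W g * ζ = W g * ζ * (star (W g) * W g) := by rw [(hWunit g).1, mul_one]
        _ = (W g * ζ * star (W g)) * W g := by rw [mul_assoc, mul_assoc, mul_assoc]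
        _ = ζ * W g := by rw [h3 g]
      have := congrFun (congrArg DFunLike.coe h4.symm) v
      simpa [ContinuousLinearMap.mul_apply] using this
    refine ⟨?_, ?_, ?_⟩
    · -- trace property
      intro a b
      obtain ⟨ρ, hρ1, hρ2, hρ3⟩ := hrho b
      have e0 : π (a * b) Ω = ρ (π a Ω) := (hρ1 a).symm
      have e1 : ζ (ρ (π a Ω)) = ρ (ζ (π a Ω)) := by
        have := congrFun (congrArg DFunLike.coe (h1 ρ hρ2)) (π a Ω)
        simpa [ContinuousLinearMap.mul_apply] using this
      have e2 : π b (π a Ω) = π (b * a) Ω := by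
        rw [← ContinuousLinearMap.mul_apply, ← map_mul]
      rw [e0, e1, hρ3, hπadj, ContinuousLinearMap.adjoint_inner_left, ← happ, e2]
    · -- positivity shape
      intro x
      rw [map_mul, ContinuousLinearMap.mul_apply, happ, hπadj,
        ContinuousLinearMap.adjoint_inner_right]
    · -- conformality
      intro a g
      set u : A := NormedSpace.exp (((β / 2 : ℝ) : ℂ) • D g⁻¹) with hu
      set u' : A := NormedSpace.exp (((-(β / 2) : ℝ) : ℂ) • D g⁻¹) with hu'
      set wA : A := NormedSpace.exp (((-β : ℝ) : ℂ) • D g⁻¹) with hwA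
      set E : A := NormedSpace.exp ((β : ℂ) • D g) with hE
      have hc1 : ((β / 2 : ℝ) : ℂ) + ((-(β / 2) : ℝ) : ℂ) = 0 := by push_cast; ring
      have hc2 : ((-β : ℝ) : ℂ) + ((β / 2 : ℝ) : ℂ) = ((-(β / 2) : ℝ) : ℂ) := by push_cast; ring
      have huu' : u * u' = 1 := by
        rw [hu, hu', hexpmul, hc1, zero_smul, NormedSpace.exp_zero]
      have hwu : wA * u = u' := by
        rw [hwA, hu, hexpmul, hc2, ← hu']
      have hstaru' : star u' = u' := by rw [hu']; exact hexpsa (-(β / 2)) g⁻¹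
      have hstarE : star E = E := by rw [hE]; exact hexpsa β g
      have hγgγginv : ∀ x : A, γ g (γ g⁻¹ x) = x := by
        intro x; rw [← hγmul, mul_inv_cancel, hγ1]
      have step1 : π (γ g a) Ω = π u' (W g (π a Ω)) := by
        rw [hWΩ g a, ← hu, ← ContinuousLinearMap.mul_apply, ← map_mul]
        have : u' * (γ g a * u) = γ g a := by
          calc u' * (γ g a * u) = (γ g a * u) * u' := by
                rw [hu']; exact hexpcentral _ g⁻¹ _
          _ = γ g a * (u * u') := by rw [mul_assoc]
          _ = γ g a := by rw [huu', mul_one]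
        rw [this]
      have step5 : star (W g) (π u' Ω) = π E Ω := by
        have h5a : W g (π (γ g⁻¹ wA) Ω) = π u' Ω := by
          rw [hWΩ g (γ g⁻¹ wA), ← hu, hγgγginv, hwu]
        have h5b : γ g⁻¹ wA = E := by
          rw [hwA, hγexp, map_smul, hDinv, hE]
          rw [smul_neg, ← neg_smul]
          norm_num
        rw [← h5b, ← h5a, ← ContinuousLinearMap.mul_apply, (hWunit g).1,
          ContinuousLinearMap.one_apply]
      calc (inner ℂ Ω (ζ (π (γ g a) Ω)) : ℂ)
          = inner ℂ Ω (π u' (W g (ζ (π a Ω)))) := by rw [step1, happ, hWcom]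
        _ = inner ℂ (π u' Ω) (W g (ζ (π a Ω))) := hπsa u' hstaru' _ _
        _ = inner ℂ (star (W g) (π u' Ω)) (ζ (π a Ω)) := by
            rw [ContinuousLinearMap.star_eq_adjoint, ContinuousLinearMap.adjoint_inner_left]
        _ = inner ℂ (π E Ω) (ζ (π a Ω)) := by rw [step5]
        _ = inner ℂ Ω (π E (ζ (π a Ω))) := (hπsa E hstarE _ _).symm
        _ = inner ℂ Ω (ζ (π (E * a) Ω)) := by
            rw [show ζ (π (E * a) Ω) = π E (ζ (π a Ω)) from by
              rw [map_mul, ContinuousLinearMap.mul_apply, happ]]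
        _ = inner ℂ Ω (ζ (π (a * E) Ω)) := by
            rw [show E * a = a * E from by rw [hE]; exact hexpcentral _ g a]
  -- norm of vector states
  have hvv : ∀ v : H, (inner ℂ v v : ℂ) = ((‖v‖ ^ 2 : ℝ) : ℂ) := by
    intro v
    exact_mod_cast inner_self_eq_norm_sq_to_K (𝕜 := ℂ) v
  have hΩ2 : ‖Ω‖ ^ 2 = 1 := by
    have h := hGNS 1
    rw [map_one, ContinuousLinearMap.one_apply, hvv Ω, hτ1] at h
    exact_mod_cast h
  -- real inner for selfadjoint operators
  have him : ∀ T : H →L[ℂ] H, star T = T →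
      ∀ v : H, (inner ℂ v (T v) : ℂ) = (((inner ℂ v (T v) : ℂ).re : ℝ) : ℂ) := by
    intro T hT v
    have h1 : (starRingEnd ℂ) (inner ℂ v (T v) : ℂ) = inner ℂ v (T v) := by
      rw [inner_conj_symm]
      conv_lhs => rw [← hT, ContinuousLinearMap.star_eq_adjoint,
        ContinuousLinearMap.adjoint_inner_left]
    exact (Complex.conj_eq_iff_re.mp h1).symm
  -- the continuous linear map a ↦ π a Ω
  have hπnormΩ : ∀ a : A, ‖π a Ω‖ ≤ ‖Ω‖ * ‖a‖ := by
    intro a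
    calc ‖π a Ω‖ ≤ ‖π a‖ * ‖Ω‖ := (π a).le_opNorm Ω
    _ ≤ ‖a‖ * ‖Ω‖ :=
        mul_le_mul_of_nonneg_right (NonUnitalStarAlgHom.norm_apply_le π a) (norm_nonneg Ω)
    _ = ‖Ω‖ * ‖a‖ := mul_comm _ _
  set Pi : A →L[ℂ] H := LinearMap.mkContinuous
    { toFun := fun a : A => π a Ω
      map_add' := by intro x y; simp [map_add]
      map_smul' := by intro c x; simp [map_smul] } ‖Ω‖ hπnormΩ with hPidef
  have hPi : ∀ a : A, Pi a = π a Ω := fun a => rfl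
  -- MAIN STEP: a selfadjoint nice operator is a real scalar
  have main : ∀ ζ : H →L[ℂ] H,
      (∀ y ∈ opCommutant (Set.range ⇑π), ζ * y = y * ζ) →
      (∀ a : A, ζ * π a = π a * ζ) →
      (∀ g : G, W g * ζ * star (W g) = ζ) →
      star ζ = ζ →
      ∃ r : ℝ, ζ = (r : ℂ) • 1 := by
    intro ζ h1 h2 h3 h4
    set nn : ℝ := ‖ζ‖ with hnn
    have hnn0 : 0 ≤ nn := norm_nonneg ζ
    have hden : 0 < 2 * nn + 2 := by linarith
    set s : ℝ := (2 * nn + 2)⁻¹ with hs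
    have hs0 : 0 < s := inv_pos.mpr hden
    have hsmul : s * (2 * nn + 2) = 1 := inv_mul_cancel₀ (ne_of_gt hden)
    set z' : H →L[ℂ] H := ((s : ℝ) : ℂ) • ζ + ((1/2 : ℝ) : ℂ) • 1 with hz'def
    set z'' : H →L[ℂ] H := 1 - z' with hz''def
    -- hypotheses for z' and z''
    have hz'1 : ∀ y ∈ opCommutant (Set.range ⇑π), z' * y = y * z' := by
      intro y hy
      rw [hz'def]
      simp only [add_mul, mul_add, smul_mul_assoc, mul_smul_comm, one_mul, mul_one, h1 y hy]
    have hz'2 : ∀ a : A, z' * π a = π a * z' := by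
      intro a
      rw [hz'def]
      simp only [add_mul, mul_add, smul_mul_assoc, mul_smul_comm, one_mul, mul_one, h2 a]
    have hz'3 : ∀ g : G, W g * z' * star (W g) = z' := by
      intro g
      rw [hz'def]
      calc W g * (((s : ℝ) : ℂ) • ζ + ((1/2 : ℝ) : ℂ) • 1) * star (W g)
          = ((s : ℝ) : ℂ) • (W g * ζ * star (W g)) + ((1/2 : ℝ) : ℂ) • (W g * star (W g)) := by
            simp only [mul_add, add_mul, mul_smul_comm, smul_mul_assoc, mul_one]
      _ = ((s : ℝ) : ℂ) • ζ + ((1/2 : ℝ) : ℂ) • 1 := by rw [h3 g, (hWunit g).2]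
    have hz'4 : star z' = z' := by
      rw [hz'def]
      simp [star_smul, star_add, h4, Complex.star_def, Complex.conj_ofReal]
    have hz''1 : ∀ y ∈ opCommutant (Set.range ⇑π), z'' * y = y * z'' := by
      intro y hy
      rw [hz''def]
      simp only [sub_mul, mul_sub, one_mul, mul_one, hz'1 y hy]
    have hz''2 : ∀ a : A, z'' * π a = π a * z'' := by
      intro a
      rw [hz''def]
      simp only [sub_mul, mul_sub, one_mul, mul_one, hz'2 a]
    have hz''3 : ∀ g : G, W g * z'' * star (W g) = z'' := by
      intro g
      rw [hz''def]
      calc W g * (1 - z') * star (W g)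
          = W g * star (W g) - W g * z' * star (W g) := by
            simp only [mul_sub, sub_mul, mul_one]
      _ = 1 - z' := by rw [hz'3 g, (hWunit g).2]
    have hz''4 : star z'' = z'' := by
      rw [hz''def]
      simp [star_sub, hz'4]
    -- bounds
    have hζre : ∀ v : H, |(inner ℂ v (ζ v) : ℂ).re| ≤ nn * ‖v‖ ^ 2 := by
      intro v
      have h5 : ‖(inner ℂ v (ζ v) : ℂ)‖ ≤ ‖v‖ * ‖ζ v‖ := norm_inner_le_norm v (ζ v)
      have h6 : ‖ζ v‖ ≤ nn * ‖v‖ := ζ.le_opNorm v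
      have h7 : |(inner ℂ v (ζ v) : ℂ).re| ≤ ‖(inner ℂ v (ζ v) : ℂ)‖ := Complex.abs_re_le_norm _
      nlinarith [norm_nonneg v, norm_nonneg (ζ v)]
    have hvalz' : ∀ v : H,
        (inner ℂ v (z' v) : ℂ) = ((s : ℝ) : ℂ) * inner ℂ v (ζ v) + ((1/2 : ℝ) : ℂ) * ((‖v‖ ^ 2 : ℝ) : ℂ) := by
      intro v
      rw [hz'def]
      simp only [ContinuousLinearMap.add_apply, ContinuousLinearMap.smul_apply,
        ContinuousLinearMap.one_apply, inner_add_right, inner_smul_right]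
      rw [hvv v]
    have hrez' : ∀ v : H,
        (inner ℂ v (z' v) : ℂ).re = s * (inner ℂ v (ζ v) : ℂ).re + (1/2) * ‖v‖ ^ 2 := by
      intro v
      rw [hvalz' v]
      simp [Complex.add_re, Complex.mul_re, Complex.ofReal_re, Complex.ofReal_im,
        -Complex.ofReal_pow]
    have hvalz'' : ∀ v : H,
        (inner ℂ v (z'' v) : ℂ) = ((‖v‖ ^ 2 : ℝ) : ℂ) - inner ℂ v (z' v) := by
      intro v
      rw [hz''def]
      simp only [ContinuousLinearMap.sub_apply, ContinuousLinearMap.one_apply, inner_sub_right]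
      rw [hvv v]
    have hz'lb : ∀ v : H, s * ‖v‖ ^ 2 ≤ (inner ℂ v (z' v) : ℂ).re := by
      intro v
      have h8 := (abs_le.mp (hζre v)).1
      rw [hrez' v]
      nlinarith [sq_nonneg ‖v‖, hs0.le]
    have hz'ub : ∀ v : H, (inner ℂ v (z' v) : ℂ).re ≤ (1 - s) * ‖v‖ ^ 2 := by
      intro v
      have h8 := (abs_le.mp (hζre v)).2
      rw [hrez' v]
      nlinarith [sq_nonneg ‖v‖, hs0.le]
    -- the number t
    set t : ℝ := (inner ℂ Ω (z' Ω) : ℂ).re with htdef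
    have ht0 : 0 < t := lt_of_lt_of_le (by nlinarith [hΩ2, hs0]) (hz'lb Ω)
    have ht1 : t < 1 := by
      have := hz'ub Ω
      rw [hΩ2] at this
      nlinarith [hs0]
    have htC : (inner ℂ Ω (z' Ω) : ℂ) = ((t : ℝ) : ℂ) := him z' hz'4 Ω
    have htC' : (inner ℂ Ω (z'' Ω) : ℂ) = (((1 - t : ℝ)) : ℂ) := by
      rw [hvalz'' Ω, hΩ2, htC]
      push_cast
      ring
    -- the two functionals
    set φ1 : A →L[ℂ] ℂ := ((t⁻¹ : ℝ) : ℂ) • ((innerSL ℂ Ω).comp (z'.comp Pi)) with hφ1def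
    set φ2 : A →L[ℂ] ℂ := (((1 - t)⁻¹ : ℝ) : ℂ) • ((innerSL ℂ Ω).comp (z''.comp Pi)) with hφ2def
    have hφ1app : ∀ a : A, φ1 a = ((t⁻¹ : ℝ) : ℂ) * inner ℂ Ω (z' (π a Ω)) := fun a => rfl
    have hφ2app : ∀ a : A, φ2 a = (((1 - t)⁻¹ : ℝ) : ℂ) * inner ℂ Ω (z'' (π a Ω)) := fun a => rfl
    obtain ⟨k1, k2, k3⟩ := key z' hz'1 hz'2 hz'3
    obtain ⟨k1', k2', k3'⟩ := key z'' hz''1 hz''2 hz''3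
    have hπ1Ω : π 1 Ω = Ω := by rw [map_one, ContinuousLinearMap.one_apply]
    -- φ1 is a conformal trace
    have hc1 : IsConformalTrace γ D β φ1 := by
      refine ⟨?_, ?_, ?_, ?_⟩
      · rw [hφ1app, hπ1Ω, htC, ← Complex.ofReal_mul, inv_mul_cancel₀ (ne_of_gt ht0),
          Complex.ofReal_one]
      · intro x
        rw [hφ1app, k2 x]
        have hre := hz'lb (π x Ω)
        have hrim : (inner ℂ (π x Ω) (z' (π x Ω)) : ℂ) = (((inner ℂ (π x Ω) (z' (π x Ω)) : ℂ).re : ℝ) : ℂ) :=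
          him z' hz'4 (π x Ω)
        rw [hrim]
        constructor
        · rw [← Complex.ofReal_mul]
          rw [Complex.ofReal_re]
          have h9 : (0:ℝ) ≤ t⁻¹ := (inv_pos.mpr ht0).le
          exact mul_nonneg h9 (le_trans (mul_nonneg hs0.le (sq_nonneg _)) hre)
        · rw [← Complex.ofReal_mul, Complex.ofReal_im]
      · intro x y
        rw [hφ1app, hφ1app, k1 x y]
      · intro a g
        rw [hφ1app, hφ1app, k3 a g]
    have hc2 : IsConformalTrace γ D β φ2 := by
      refine ⟨?_, ?_, ?_, ?_⟩
      · rw [hφ2app, hπ1Ω, htC', ← Complex.ofReal_mul,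
          inv_mul_cancel₀ (ne_of_gt (by linarith : (0:ℝ) < 1 - t)), Complex.ofReal_one]
      · intro x
        rw [hφ2app, k2' x]
        have ht1' : (0:ℝ) < 1 - t := by linarith
        have hre1 := hz'ub (π x Ω)
        have hre : (inner ℂ (π x Ω) (z'' (π x Ω)) : ℂ).re = ‖π x Ω‖ ^ 2 - (inner ℂ (π x Ω) (z' (π x Ω)) : ℂ).re := by
          rw [hvalz'' (π x Ω)]
          simp [Complex.sub_re, Complex.ofReal_re, -Complex.ofReal_pow]
        have hrim : (inner ℂ (π x Ω) (z'' (π x Ω)) : ℂ) = (((inner ℂ (π x Ω) (z'' (π x Ω)) : ℂ).re : ℝ) : ℂ) :=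
          him z'' hz''4 (π x Ω)
        rw [hrim]
        constructor
        · rw [← Complex.ofReal_mul, Complex.ofReal_re]
          have h9 : (0:ℝ) ≤ (1 - t)⁻¹ := inv_nonneg.mpr (by linarith)
          rw [hre]
          exact mul_nonneg h9 (by nlinarith [sq_nonneg ‖π x Ω‖, hs0.le])
        · rw [← Complex.ofReal_mul, Complex.ofReal_im]
      · intro x y
        rw [hφ2app, hφ2app, k1' x y]
      · intro a g
        rw [hφ2app, hφ2app, k3' a g]
    -- decomposition of τ
    have hdecomp : τ = ((t : ℝ) : ℂ) • φ1 + (((1 - t : ℝ)) : ℂ) • φ2 := by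
      ext a
      have e1 : ((t : ℝ) : ℂ) * φ1 a = inner ℂ Ω (z' (π a Ω)) := by
        rw [hφ1app, ← mul_assoc, ← Complex.ofReal_mul, mul_inv_cancel₀ (ne_of_gt ht0)]
        norm_num
      have e2 : (((1 - t : ℝ)) : ℂ) * φ2 a = inner ℂ Ω (z'' (π a Ω)) := by
        rw [hφ2app, ← mul_assoc, ← Complex.ofReal_mul,
          mul_inv_cancel₀ (ne_of_gt (by linarith : (0:ℝ) < 1 - t))]
        norm_num
      have e3 : z' (π a Ω) + z'' (π a Ω) = π a Ω := by
        rw [hz''def]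
        simp
      simp only [ContinuousLinearMap.add_apply, ContinuousLinearMap.smul_apply, smul_eq_mul]
      rw [e1, e2, ← inner_add_right, e3, hGNS]
    obtain ⟨heq, -⟩ := hext φ1 φ2 hc1 hc2 t ht0 ht1 hdecomp
    -- conclude z' = t • 1
    have hval : ∀ a : A, (inner ℂ Ω (z' (π a Ω)) : ℂ) = ((t : ℝ) : ℂ) * τ a := by
      intro a
      have h := congrFun (congrArg DFunLike.coe heq) a
      rw [hφ1app] at h
      calc (inner ℂ Ω (z' (π a Ω)) : ℂ)
          = ((t : ℝ) : ℂ) * (((t⁻¹ : ℝ) : ℂ) * inner ℂ Ω (z' (π a Ω))) := by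
            rw [← mul_assoc, ← Complex.ofReal_mul, mul_inv_cancel₀ (ne_of_gt ht0)]
            norm_num
        _ = ((t : ℝ) : ℂ) * τ a := by rw [h]
    have hz'app : ∀ (a : A) (v : H), z' (π a v) = π a (z' v) := by
      intro a v
      have := congrFun (congrArg DFunLike.coe (hz'2 a)) v
      simpa [ContinuousLinearMap.mul_apply] using this
    have hz't : z' = ((t : ℝ) : ℂ) • 1 := by
      apply auxExtOn hcyc
      rintro v ⟨c, rfl⟩
      have hrhs : (((t : ℝ) : ℂ) • (1 : H →L[ℂ] H)) (π c Ω) = ((t : ℝ) : ℂ) • (π c Ω) := rfl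
      rw [hrhs]
      apply vecext
      intro b
      have e : π (star b) (π c Ω) = π (star b * c) Ω := by
        rw [← ContinuousLinearMap.mul_apply, ← map_mul]
      have l1 : (inner ℂ (π b Ω) (z' (π c Ω)) : ℂ) = inner ℂ Ω (z' (π (star b * c) Ω)) := by
        rw [(ContinuousLinearMap.adjoint_inner_right (π b) Ω (z' (π c Ω))).symm, ← hπadj,
          ← hz'app, e]
      have l2 : (inner ℂ (π b Ω) (π c Ω) : ℂ) = inner ℂ Ω (π (star b * c) Ω) := by
        rw [(ContinuousLinearMap.adjoint_inner_right (π b) Ω (π c Ω)).symm, ← hπadj, e]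
      rw [l1, hval (star b * c), inner_smul_right, l2, hGNS]
    -- conclude ζ is a scalar
    have hsC : ((s : ℝ) : ℂ) ≠ 0 := by
      exact_mod_cast ne_of_gt hs0
    refine ⟨s⁻¹ * (t - 1/2), ?_⟩
    have h10 : ((s : ℝ) : ℂ) • ζ = ((t - 1/2 : ℝ) : ℂ) • (1 : H →L[ℂ] H) := by
      have h11 : ((s : ℝ) : ℂ) • ζ + ((1/2 : ℝ) : ℂ) • (1 : H →L[ℂ] H) = ((t : ℝ) : ℂ) • 1 := by
        rw [← hz'def, hz't]
      have h12 := eq_sub_of_add_eq h11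
      rw [h12, ← sub_smul]
      congr 1
      push_cast
      ring
    calc ζ = ((s : ℝ) : ℂ)⁻¹ • (((s : ℝ) : ℂ) • ζ) := by
          rw [smul_smul, inv_mul_cancel₀ hsC, one_smul]
    _ = ((s : ℝ) : ℂ)⁻¹ • (((t - 1/2 : ℝ) : ℂ) • (1 : H →L[ℂ] H)) := by rw [h10]
    _ = ((s⁻¹ * (t - 1/2) : ℝ) : ℂ) • 1 := by
        rw [smul_smul]
        congr 1
        push_cast
        ring
  -- FINAL ASSEMBLY
  intro z hz hzc hzW
  have hz_comm : ∀ y ∈ opCommutant (Set.range ⇑π), z * y = y * z := hz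
  have hz_pi : ∀ a : A, z * π a = π a * z := fun a =>
    hzc (π a) (fun y hy => (hy (π a) ⟨a, rfl⟩).symm)
  have hstar_comm : ∀ y ∈ opCommutant (Set.range ⇑π), star z * y = y * star z := by
    intro y hy
    have hsy : star y ∈ opCommutant (Set.range ⇑π) := by
      rintro w ⟨a, rfl⟩
      have h := hy (π (star a)) ⟨star a, rfl⟩
      calc star y * π a = star y * star (π (star a)) := by rw [map_star, star_star]
      _ = star (π (star a) * y) := by rw [star_mul]
      _ = star (y * π (star a)) := by rw [h]
      _ = star (π (star a)) * star y := by rw [star_mul]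
      _ = π a * star y := by rw [map_star, star_star]
    have h2 := hz_comm (star y) hsy
    calc star z * y = star z * star (star y) := by rw [star_star]
    _ = star (star y * z) := by rw [star_mul]
    _ = star (z * star y) := by rw [h2]
    _ = star (star y) * star z := by rw [star_mul]
    _ = y * star z := by rw [star_star]
  have hstar_pi : ∀ a : A, star z * π a = π a * star z := by
    intro a
    have h := hz_pi (star a)
    calc star z * π a = star z * star (π (star a)) := by rw [map_star, star_star]
    _ = star (π (star a) * z) := by rw [star_mul]
    _ = star (z * π (star a)) := by rw [h]
    _ = star (π (star a)) * star z := by rw [star_mul]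
    _ = π a * star z := by rw [map_star, star_star]
  have hstar_W : ∀ g : G, W g * star z * star (W g) = star z := by
    intro g
    have h := congrArg star (hzW g)
    rw [star_mul, star_mul, star_star, ← mul_assoc] at h
    exact h
  set xc : H →L[ℂ] H := ((2⁻¹ : ℝ) : ℂ) • (z + star z) with hxcdef
  set yc : H →L[ℂ] H := (Complex.I * ((2⁻¹ : ℝ) : ℂ)) • (star z - z) with hycdef
  have hx1 : ∀ y ∈ opCommutant (Set.range ⇑π), xc * y = y * xc := by
    intro y hy
    rw [hxcdef]
    simp only [smul_mul_assoc, mul_smul_comm, add_mul, mul_add, hz_comm y hy,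
      hstar_comm y hy]
  have hx2 : ∀ a : A, xc * π a = π a * xc := by
    intro a
    rw [hxcdef]
    simp only [smul_mul_assoc, mul_smul_comm, add_mul, mul_add, hz_pi a, hstar_pi a]
  have hx3 : ∀ g : G, W g * xc * star (W g) = xc := by
    intro g
    have h : W g * (z + star z) * star (W g) = z + star z := by
      rw [mul_add, add_mul, hzW g, hstar_W g]
    rw [hxcdef, mul_smul_comm, smul_mul_assoc, h]
  have hx4 : star xc = xc := by
    rw [hxcdef]
    simp [star_smul, star_add, star_star, Complex.star_def, Complex.conj_ofReal, add_comm]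
  have hy1 : ∀ y ∈ opCommutant (Set.range ⇑π), yc * y = y * yc := by
    intro y hy
    rw [hycdef]
    simp only [smul_mul_assoc, mul_smul_comm, sub_mul, mul_sub, hz_comm y hy,
      hstar_comm y hy]
  have hy2 : ∀ a : A, yc * π a = π a * yc := by
    intro a
    rw [hycdef]
    simp only [smul_mul_assoc, mul_smul_comm, sub_mul, mul_sub, hz_pi a, hstar_pi a]
  have hy3 : ∀ g : G, W g * yc * star (W g) = yc := by
    intro g
    have h : W g * (star z - z) * star (W g) = star z - z := by
      rw [mul_sub, sub_mul, hzW g, hstar_W g]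
    rw [hycdef, mul_smul_comm, smul_mul_assoc, h]
  have hy4 : star yc = yc := by
    rw [hycdef]
    rw [star_smul, star_sub, star_star]
    have : star (Complex.I * ((2⁻¹ : ℝ) : ℂ)) = -(Complex.I * ((2⁻¹ : ℝ) : ℂ)) := by
      simp [Complex.star_def, Complex.conj_ofReal]
    rw [this, neg_smul, ← smul_neg, neg_sub]
  obtain ⟨r1, hr1⟩ := main xc hx1 hx2 hx3 hx4
  obtain ⟨r2, hr2⟩ := main yc hy1 hy2 hy3 hy4
  refine ⟨(r1 : ℂ) + (r2 : ℂ) * Complex.I, ?_⟩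
  have hI : Complex.I * (Complex.I * ((2⁻¹ : ℝ) : ℂ)) = -(((2⁻¹ : ℝ) : ℂ)) := by
    rw [← mul_assoc, Complex.I_mul_I]
    ring
  have hzd : z = xc + Complex.I • yc := by
    rw [hxcdef, hycdef, smul_smul, hI]
    push_cast
    module
  rw [hzd, hr1, hr2, smul_smul]
  module
end

section
/- Let ω be a state on a C*-algebra B with GNS representation (H_ω, π_ω, Ω_ω), and let b ∈ B be such that the one-parameter group α fixes bb*, i.e. α_t(b)α_t(b)* = bb* for all t, and z ↦ α_z(b) is entire. Let P be the range projection of π_ω(b) in π_ω(B)''. Then P π_ω(α_z(b)) = π_ω(α_z(b)) for all z ∈ ℂ; in particular P π_ω(α_{iβ}(b)) = π_ω(α_{iβ}(b)). -/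
open scoped CStarAlgebra

/-- Let `ω` be a state on a C*-algebra `B` with GNS representation
`(H_ω, π_ω, Ω_ω)`, and let `b ∈ B` be such that the flow `α` fixes `b b*`,
i.e. `α_t(b) α_t(b)* = b b*` for all `t`, and `z ↦ α_z(b)` is entire (extension `F`).
Let `P` be the range projection of `π_ω(b)` in `π_ω(B)''`.  Then
`P π_ω(α_z(b)) = π_ω(α_z(b))` for all `z ∈ ℂ`; in particular for `z = iβ`. -/
theorem stmt16 {B : Type*} [NormedRing B] [StarRing B] [CStarRing B]
    [NormedAlgebra ℂ B] [CompleteSpace B] [StarModule ℂ B]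
    -- the flow
    (α : ℝ → (B →⋆ₐ[ℂ] B))
    (hα0 : α 0 = StarAlgHom.id ℂ B)
    (hαadd : ∀ s t : ℝ, (α (s + t)) = (α s).comp (α t))
    (hαcont : ∀ x : B, Continuous fun t => α t x)
    -- the state ω and its GNS representation
    (ω : B →L[ℂ] ℂ) (hωnorm : ‖ω‖ = 1)
    (hωpos : ∀ x : B, 0 ≤ (ω (star x * x)).re ∧ (ω (star x * x)).im = 0)
    {H : Type*} [NormedAddCommGroup H] [InnerProductSpace ℂ H] [CompleteSpace H]
    (π : B →⋆ₐ[ℂ] (H →L[ℂ] H)) (Ω : H)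
    (hGNS : ∀ x : B, (inner ℂ Ω (π x Ω) : ℂ) = ω x)
    (hcyc : (Submodule.span ℂ (Set.range fun x : B => π x Ω)).topologicalClosure = ⊤)
    -- b with α_t(b) α_t(b)* = b b* and entire extension F of t ↦ α_t(b)
    (b : B)
    (hbb : ∀ t : ℝ, α t b * star (α t b) = b * star b)
    (F : ℂ → B) (hF : Differentiable ℂ F) (hFR : ∀ t : ℝ, F (t : ℂ) = α t b)
    -- P is the range projection of π_ω(b)
    (P : H →L[ℂ] H)
    (hPidem : P * P = P) (hPsa : IsSelfAdjoint P)
    (hPrange : Set.range P = closure (Set.range fun ξ : H => π b ξ)) :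
    ∀ z : ℂ, P * π (F z) = π (F z) := by
  classical
  letI : CStarAlgebra B :=
    { ‹NormedRing B›, ‹StarRing B›, ‹CStarRing B›, ‹NormedAlgebra ℂ B›,
      ‹CompleteSpace B›, ‹StarModule ℂ B› with }
  -- P is idempotent pointwise
  have hPP : ∀ ξ : H, P (P ξ) = P ξ := by
    intro ξ
    have := congrArg (fun T : H →L[ℂ] H => T ξ) hPidem
    simpa using this
  -- P fixes the range of π b
  have hPS : ∀ ξ : H, P (π b ξ) = π b ξ := by
    intro ξ
    have hmem : π b ξ ∈ Set.range P := by
      rw [hPrange]; exact subset_closure ⟨ξ, rfl⟩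
    obtain ⟨η, hη⟩ := hmem
    rw [← hη]; exact hPP η
  -- P is self-adjoint, as an inner-product identity
  have hPadj : ContinuousLinearMap.adjoint P = P := by
    rw [← ContinuousLinearMap.star_eq_adjoint]; exact hPsa
  have hPinner : ∀ x y : H, (inner ℂ (P x) y : ℂ) = inner ℂ x (P y) := by
    intro x y
    conv_lhs => rw [← hPadj]
    exact ContinuousLinearMap.adjoint_inner_left P y x
  -- adjoint of π b kills (1 - P)
  have hSQ : ∀ x : H, ContinuousLinearMap.adjoint (π b) (x - P x) = 0 := by
    intro x
    set u := ContinuousLinearMap.adjoint (π b) (x - P x) with hu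
    have h1 : (inner ℂ u u : ℂ) = inner ℂ (x - P x) (π b u) :=
      ContinuousLinearMap.adjoint_inner_left (π b) u (x - P x)
    have h2 : (inner ℂ (x - P x) (π b u) : ℂ) = 0 := by
      rw [inner_sub_left, hPinner x (π b u), hPS u, sub_self]
    exact inner_self_eq_zero.mp (h1.trans h2)
  -- the key real-time fact:  P fixes the range of π (F t) for t real
  have key : ∀ t : ℝ, ∀ ξ : H, P (π (F (t : ℂ)) ξ) = π (F (t : ℂ)) ξ := by
    intro t ξ
    set T := π (F (t : ℂ)) with hT
    -- T T* = S S*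
    have hTT : T * star T = π b * star (π b) := by
      rw [hT, ← map_star, ← map_star, ← map_mul, ← map_mul, hFR t, hbb t]
    -- adjoint of T kills (1 - P)
    have hTQ : ∀ x : H, ContinuousLinearMap.adjoint T (x - P x) = 0 := by
      intro x
      set v := ContinuousLinearMap.adjoint T (x - P x) with hv
      have h1 : (inner ℂ v v : ℂ) = inner ℂ (x - P x) (T v) :=
        ContinuousLinearMap.adjoint_inner_left T v (x - P x)
      have h3 : T v = π b (ContinuousLinearMap.adjoint (π b) (x - P x)) := by
        have := congrArg (fun A : H →L[ℂ] H => A (x - P x)) hTT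
        simpa [ContinuousLinearMap.mul_apply, ContinuousLinearMap.star_eq_adjoint,
          hv] using this
      have h4 : T v = 0 := by rw [h3, hSQ x, map_zero]
      have h5 : (inner ℂ v v : ℂ) = 0 := by rw [h1, h4, inner_zero_right]
      exact inner_self_eq_zero.mp h5
    -- conclude P (T ξ) = T ξ
    set w := T ξ - P (T ξ) with hw
    have hPw : P w = 0 := by rw [hw, map_sub, hPP]; exact sub_self _
    have h1 : (inner ℂ w w : ℂ) = inner ℂ (T ξ) w - inner ℂ (P (T ξ)) w := by
      rw [hw, inner_sub_left]
    have h2 : (inner ℂ (P (T ξ)) w : ℂ) = 0 := by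
      rw [hPinner, hPw, inner_zero_right]
    have h3 : (inner ℂ (T ξ) w : ℂ) = inner ℂ ξ (ContinuousLinearMap.adjoint T w) :=
      (ContinuousLinearMap.adjoint_inner_right T ξ w).symm
    have h4 : (inner ℂ w w : ℂ) = 0 := by
      rw [h1, h2, h3, hTQ (T ξ), inner_zero_right]; ring
    have := inner_self_eq_zero.mp h4
    rw [hw, sub_eq_zero] at this
    exact this.symm
  -- π is continuous (star homs of C*-algebras are contractive)
  have hπle : ∀ a : B, ‖π.toAlgHom.toLinearMap a‖ ≤ 1 * ‖a‖ := by
    intro a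
    simpa using NonUnitalStarAlgHom.norm_apply_le π a
  let πc : B →L[ℂ] (H →L[ℂ] H) := LinearMap.mkContinuous π.toAlgHom.toLinearMap 1 hπle
  have hπc : ∀ a : B, πc a = π a := fun a => rfl
  -- now the complex case via the identity theorem
  intro z
  ext η
  show P (π (F z) η) = π (F z) η
  set ξ0 : H := P (π (F z) η) - π (F z) η with hξ0
  -- the entire function under consideration
  let L : B →L[ℂ] ℂ :=
    (innerSL ℂ ξ0).comp (((P - 1) : H →L[ℂ] H).comp
      ((ContinuousLinearMap.apply ℂ H η).comp πc))
  have hLval : ∀ a : B, L a = inner ℂ ξ0 (P (π a η) - π a η) := by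
    intro a
    simp [L, hπc, ContinuousLinearMap.sub_apply, ContinuousLinearMap.one_apply,
      inner_sub_right]
  have hg : Differentiable ℂ (fun w => L (F w)) := L.differentiable.comp hF
  have hreal : ∀ r : ℝ, L (F (r : ℂ)) = 0 := by
    intro r
    rw [hLval, key r η, sub_self, inner_zero_right]
  -- accumulation of real zeros at 0
  have htend0 : Filter.Tendsto (fun n : ℕ => ((((n : ℝ) + 1)⁻¹ : ℝ) : ℂ))
      Filter.atTop (nhds (0 : ℂ)) := by
    have h := tendsto_one_div_add_atTop_nhds_zero_nat (𝕜 := ℝ)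
    have := (Complex.continuous_ofReal.tendsto (0 : ℝ)).comp h
    simpa [Function.comp_def] using this
  have htend : Filter.Tendsto (fun n : ℕ => ((((n : ℝ) + 1)⁻¹ : ℝ) : ℂ))
      Filter.atTop (nhdsWithin (0 : ℂ) {(0 : ℂ)}ᶜ) := by
    refine tendsto_nhdsWithin_of_tendsto_nhds_of_eventually_within _ htend0 ?_
    refine Filter.Eventually.of_forall fun n => ?_
    simp only [Set.mem_compl_iff, Set.mem_singleton_iff]
    exact_mod_cast Complex.ofReal_ne_zero.mpr (inv_ne_zero (by positivity))
  have hfreq : ∃ᶠ w in nhdsWithin (0 : ℂ) {(0 : ℂ)}ᶜ, L (F w) = 0 :=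
    htend.frequently (Filter.Frequently.of_forall fun n => hreal _)
  have hanal : AnalyticOnNhd ℂ (fun w => L (F w)) Set.univ :=
    hg.differentiableOn.analyticOnNhd isOpen_univ
  have hzero : Set.EqOn (fun w => L (F w)) 0 Set.univ :=
    hanal.eqOn_zero_of_preconnected_of_frequently_eq_zero isPreconnected_univ
      (Set.mem_univ 0) hfreq
  have hz : L (F z) = 0 := hzero (Set.mem_univ z)
  rw [hLval] at hz
  have : ξ0 = 0 := inner_self_eq_zero.mp (by rw [← hξ0] at hz; exact hz)
  rw [hξ0, sub_eq_zero] at this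
  exact this
end

section
/- Let G be a discrete abelian group, H ⊆ G a subgroup, τ a state on a C*-algebra A with GNS data (H_τ, π_τ, Ω_τ), w a unitary representation of H in π_τ(A)'', and ξ, ξ' characters of H. If the states ω, ω' on the crossed product determined by ω(a u_g) = ξ(g) τ̄(π_τ(a) w_g) for g ∈ H and 0 otherwise (and similarly ω' with ξ'), agree, and if for each h ∈ H there is a sequence a_n ∈ A with π_τ(a_n) → w_h* strongly, then ξ = ξ'. -/
open Filter Topology

/-- Let `G` be a discrete abelian group, `H ⊆ G` a subgroup, `τ` a state on
a C*-algebra `A` with GNS data `(H_τ, π_τ, Ω_τ)`, `w` a unitary representation of `H` in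
`π_τ(A)''`, and `ξ, ξ'` characters of `H`.  If the states on the crossed product
determined by `ω(a u_g) = ξ(g) τ̄(π_τ(a) w_g)` for `g ∈ H` (and `0` otherwise), and
similarly with `ξ'`, agree, and if for each `h ∈ H` there is a sequence `aₙ ∈ A` with
`π_τ(aₙ) → w_h*` strongly, then `ξ = ξ'`. -/
theorem stmt19 {G : Type*} [CommGroup G] (H : Subgroup G)
    {A : Type*} [NormedRing A] [StarRing A] [CStarRing A]
    [NormedAlgebra ℂ A] [CompleteSpace A] [StarModule ℂ A]
    -- τ a state on A with GNS data
    (τ : A →L[ℂ] ℂ) (hτ1 : τ 1 = 1)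
    (hτpos : ∀ x : A, 0 ≤ (τ (star x * x)).re ∧ (τ (star x * x)).im = 0)
    {Hτ : Type*} [NormedAddCommGroup Hτ] [InnerProductSpace ℂ Hτ] [CompleteSpace Hτ]
    (π : A →⋆ₐ[ℂ] (Hτ →L[ℂ] Hτ)) (Ω : Hτ)
    (hΩ : ‖Ω‖ = 1)
    (hGNS : ∀ a : A, (inner ℂ Ω (π a Ω) : ℂ) = τ a)
    (hcyc : (Submodule.span ℂ (Set.range fun a : A => π a Ω)).topologicalClosure = ⊤)
    -- w a unitary representation of H in π_τ(A)''
    (w : H → (Hτ →L[ℂ] Hτ))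
    (hwmem : ∀ h : H, w h ∈ opCommutant (opCommutant (Set.range π)))
    (hwunit : ∀ h : H, star (w h) * w h = 1 ∧ w h * star (w h) = 1)
    (hwrep : ∀ h₁ h₂ : H, w (h₁ * h₂) = w h₁ * w h₂)
    -- ξ, ξ' characters of H
    (ξ ξ' : H → ℂ)
    (hξabs : ∀ h : H, ‖ξ h‖ = 1)
    (hξmul : ∀ h₁ h₂ : H, ξ (h₁ * h₂) = ξ h₁ * ξ h₂)
    (hξ'abs : ∀ h : H, ‖ξ' h‖ = 1)
    (hξ'mul : ∀ h₁ h₂ : H, ξ' (h₁ * h₂) = ξ' h₁ * ξ' h₂)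
    -- agreement of the two states determined by ξ and ξ' (their values on the spanning
    -- elements a u_g: zero off H, and ξ(g) τ̄(π_τ(a) w_g) for g ∈ H)
    (hagree : ∀ (h : H) (a : A),
      ξ h * (inner ℂ Ω ((π a * w h) Ω) : ℂ) = ξ' h * (inner ℂ Ω ((π a * w h) Ω) : ℂ))
    -- strong approximation of w_h* from π_τ(A)
    (happrox : ∀ h : H, ∃ a : ℕ → A,
      ∀ x : Hτ, Tendsto (fun n => π (a n) x) atTop (𝓝 (star (w h) x))) :
    ξ = ξ' := by
  funext h
  obtain ⟨a, ha⟩ := happrox h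
  have hlim : Tendsto (fun n => (inner ℂ Ω (π (a n) (w h Ω)) : ℂ)) atTop
      (𝓝 (inner ℂ Ω (star (w h) (w h Ω)))) :=
    tendsto_const_nhds.inner (ha (w h Ω))
  have heq : (inner ℂ Ω (star (w h) (w h Ω)) : ℂ) = 1 := by
    have : star (w h) (w h Ω) = Ω := by
      have := congrArg (fun T : Hτ →L[ℂ] Hτ => T Ω) (hwunit h).1
      simpa using this
    rw [this, inner_self_eq_norm_sq_to_K, hΩ]
    norm_num
  rw [heq] at hlim
  have hne : ∀ᶠ n in atTop, (inner ℂ Ω (π (a n) (w h Ω)) : ℂ) ≠ 0 := by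
    have : {z : ℂ | z ≠ 0} ∈ 𝓝 (1 : ℂ) :=
      IsOpen.mem_nhds isOpen_ne one_ne_zero
    exact hlim.eventually this
  obtain ⟨n, hn⟩ := hne.exists
  have := hagree h (a n)
  simp only [ContinuousLinearMap.mul_apply] at this
  exact mul_right_cancel₀ hn this
end
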